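/- arXiv:0705.3342 — 5 statements merged into one kernel-verified Lean document; each statement's English description precedes it below -/
import Mathlib

section
/- In P-probability, n^{-3/4} · sup_{y ∈ ℤ} N_n(y) converges to 0 as n → ∞; that is, for every ε > 0, P( sup_{y ∈ ℤ} N_n(y) > ε n^{3/4} ) → 0. -/
open MeasureTheory ProbabilityTheory Filter

noncomputable section

/-- The simple random walk `Y_n = η_1 + ⋯ + η_n`, with `Y_0 = 0`. -/
def walk {Ω : Type*} (η : ℕ → Ω → ℤ) (n : ℕ) (ω : Ω) : ℤ :=
  ∑ k ∈ Finset.range n, η (k + 1) ω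

/-- The local time `N_n(y) = #{0 ≤ k ≤ n : Y_k = y}` of the walk. -/
def localTime {Ω : Type*} (η : ℕ → Ω → ℤ) (n : ℕ) (y : ℤ) (ω : Ω) : ℕ :=
  ((Finset.range (n + 1)).filter fun k => walk η k ω = y).card

open scoped ENNReal

namespace SLTProof

lemma c_zero' (t : ℤ) : True := trivial


/-- numbers of ±1-paths of length `m` with sum `t` -/
def c : ℕ → ℤ → ℕ
  | 0, t => if t = 0 then 1 else 0
  | (m+1), t => c m (t-1) + c m (t+1)

lemma c_eq_zero_of_lt : ∀ (m : ℕ) (t : ℤ), t < -(m:ℤ) → c m t = 0 := by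
  intro m
  induction m with
  | zero => intro t ht; simp [c]; omega
  | succ m ih =>
    intro t ht
    simp only [c]
    rw [ih (t-1) (by push_cast; omega), ih (t+1) (by push_cast; omega)]

lemma c_spec : ∀ (m j : ℕ), c m (2*(j:ℤ) - m) = m.choose j := by
  intro m
  induction m with
  | zero =>
    intro j
    rcases Nat.eq_zero_or_pos j with h | h
    · subst h; simp [c]
    · simp only [c]
      rw [if_neg (by omega), Nat.choose_eq_zero_iff.2 (by omega)]
  | succ m ih =>
    intro j
    rcases Nat.eq_zero_or_pos j with h | h
    · subst h
      simp only [c]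
      have h1 : (2*((0:ℕ):ℤ) - (m+1:ℕ)) - 1 < -(m:ℤ) := by push_cast; omega
      rw [c_eq_zero_of_lt m _ h1]
      have h2 : (2*((0:ℕ):ℤ) - (m+1:ℕ)) + 1 = 2*((0:ℕ):ℤ) - m := by push_cast; ring
      rw [h2, ih 0]
      simp
    · obtain ⟨i, rfl⟩ : ∃ i, j = i + 1 := ⟨j - 1, by omega⟩
      simp only [c]
      have h1 : (2*((i+1:ℕ):ℤ) - (m+1:ℕ)) - 1 = 2*(i:ℤ) - m := by push_cast; ring
      have h2 : (2*((i+1:ℕ):ℤ) - (m+1:ℕ)) + 1 = 2*((i+1:ℕ):ℤ) - m := by push_cast; ring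
      rw [h1, h2, ih i, ih (i+1), Nat.choose_succ_succ]

lemma c_parity : ∀ (m : ℕ) (t : ℤ), ¬ Even ((m:ℤ) + t) → c m t = 0 := by
  intro m
  induction m with
  | zero =>
    intro t ht
    simp only [c]
    rw [if_neg]
    rintro rfl; exact ht (by simp)
  | succ m ih =>
    intro t ht
    simp only [c]
    have h1 : c m (t-1) = 0 := by
      apply ih; rintro ⟨r, hr⟩; exact ht ⟨r+1, by push_cast at hr ⊢; omega⟩
    have h2 : c m (t+1) = 0 := by
      apply ih; rintro ⟨r, hr⟩; exact ht ⟨r, by push_cast at hr ⊢; omega⟩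
    rw [h1, h2]


open Nat

lemma centralBinom_sq_bound : ∀ t : ℕ, (3*t+1) * (Nat.centralBinom t)^2 ≤ 16 ^ t := by
  intro t
  induction t with
  | zero => simp [Nat.centralBinom]
  | succ t ih =>
    have key : (t+1)^2 * ((3*(t+1)+1) * (Nat.centralBinom (t+1))^2) * (3*t+1)
        = (4 * (2*t+1)^2 * (3*t+4)) * ((3*t+1) * (Nat.centralBinom t)^2) := by
      have h := Nat.succ_mul_centralBinom_succ t
      have h2 : ((t+1) * Nat.centralBinom (t+1))^2 = (2 * (2*t+1) * Nat.centralBinom t)^2 := by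
        rw [h]
      ring_nf at h2 ⊢
      nlinarith [h2]
    have harith : 4 * (2*t+1)^2 * (3*t+4) ≤ 16 * ((t+1)^2 * (3*t+1)) := by nlinarith
    have : (t+1)^2 * ((3*(t+1)+1) * (Nat.centralBinom (t+1))^2) * (3*t+1)
        ≤ (t+1)^2 * (16 * 16^t) * (3*t+1) := by
      rw [key]
      calc (4 * (2*t+1)^2 * (3*t+4)) * ((3*t+1) * (Nat.centralBinom t)^2)
          ≤ (16 * ((t+1)^2 * (3*t+1))) * 16^t := Nat.mul_le_mul harith ih
        _ = (t+1)^2 * (16 * 16^t) * (3*t+1) := by ring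
    have h3 : ((t+1)^2 * (3*t+1)) * ((3*(t+1)+1) * (Nat.centralBinom (t+1))^2)
        ≤ ((t+1)^2 * (3*t+1)) * 16^(t+1) := by
      calc ((t+1)^2 * (3*t+1)) * ((3*(t+1)+1) * (Nat.centralBinom (t+1))^2)
          = (t+1)^2 * ((3*(t+1)+1) * (Nat.centralBinom (t+1))^2) * (3*t+1) := by ring
        _ ≤ (t+1)^2 * (16 * 16^t) * (3*t+1) := this
        _ = ((t+1)^2 * (3*t+1)) * 16^(t+1) := by rw [pow_succ]; ring
    exact Nat.le_of_mul_le_mul_left h3 (by positivity)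


lemma c_zero (t : ℤ) : c 0 t = if t = 0 then 1 else 0 := rfl
lemma c_succ (m : ℕ) (t : ℤ) : c (m+1) t = c m (t-1) + c m (t+1) := rfl




-- assume from before:
lemma c_zero_bound (m : ℕ) : (c m 0 : ℝ) * Real.sqrt (m+1) ≤ 2^m := by
  rcases Nat.even_or_odd m with ⟨u, rfl⟩ | hodd
  · have hval : c (u+u) 0 = Nat.centralBinom u := by
      have := c_spec (u+u) u
      simp only [Nat.centralBinom]
      rw [show (2*(u:ℤ) - ((u+u:ℕ):ℤ)) = 0 by push_cast; ring] at this
      rw [this, show u+u = 2*u by ring]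
    rw [hval]
    have hb : ((3*u+1 : ℕ) : ℝ) * ((Nat.centralBinom u : ℝ))^2 ≤ (16:ℝ)^u := by
      calc ((3*u+1 : ℕ) : ℝ) * ((Nat.centralBinom u : ℝ))^2
          = (((3*u+1) * (Nat.centralBinom u)^2 : ℕ) : ℝ) := by push_cast; ring
        _ ≤ ((16^u : ℕ) : ℝ) := Nat.cast_le.2 (centralBinom_sq_bound u)
        _ = (16:ℝ)^u := by push_cast; ring
    set CB := (Nat.centralBinom u : ℝ) with hCB
    have hs : Real.sqrt ((u+u:ℕ)+1) ^ 2 = (u+u:ℕ)+1 := Real.sq_sqrt (by positivity)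
    have hle : (CB * Real.sqrt ((u+u:ℕ)+1))^2 ≤ ((4:ℝ)^u)^2 := by
      have : (CB * Real.sqrt ((u+u:ℕ)+1))^2 = CB^2 * (((u+u:ℕ):ℝ)+1) := by
        rw [mul_pow, hs]
      rw [this, show ((4:ℝ)^u)^2 = 16^u by rw [← pow_mul, show (16:ℝ) = 4^2 by norm_num, ← pow_mul, mul_comm]]
      have h1 : CB^2 * (((u+u:ℕ):ℝ)+1) ≤ ((3*u+1 : ℕ) : ℝ) * CB^2 := by
        have : (((u+u:ℕ):ℝ)+1) ≤ ((3*u+1 : ℕ) : ℝ) := by push_cast; linarith [Nat.cast_nonneg (α := ℝ) u]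
        nlinarith [sq_nonneg CB]
      exact h1.trans hb
    have h4 : CB * Real.sqrt ((u+u:ℕ)+1) ≤ (4:ℝ)^u := by
      have hnn : 0 ≤ CB * Real.sqrt ((u+u:ℕ)+1) := by positivity
      calc CB * Real.sqrt ((u+u:ℕ)+1)
          = Real.sqrt ((CB * Real.sqrt ((u+u:ℕ)+1))^2) := (Real.sqrt_sq hnn).symm
        _ ≤ Real.sqrt (((4:ℝ)^u)^2) := Real.sqrt_le_sqrt hle
        _ = (4:ℝ)^u := Real.sqrt_sq (by positivity)
    calc CB * Real.sqrt (((u+u:ℕ):ℝ)+1) ≤ (4:ℝ)^u := h4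
      _ = (2:ℝ)^(u+u) := by rw [show (4:ℝ) = 2^2 by norm_num, ← pow_mul]; ring_nf
  · have : c m 0 = 0 := by
      apply c_parity
      rcases hodd with ⟨u, rfl⟩
      rintro ⟨r, hr⟩; push_cast at hr; omega
    rw [this]
    simp


variable {Ω : Type*} [MeasureSpace Ω] [IsProbabilityMeasure (ℙ : Measure Ω)]
  {η : ℕ → Ω → ℤ}

lemma eta_null (hη_meas : ∀ k, Measurable (η k))
    (hη_one : ∀ k, ℙ {ω | η k ω = 1} = 1/2)
    (hη_negone : ∀ k, ℙ {ω | η k ω = -1} = 1/2) (k : ℕ) :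
    ℙ ({ω | η k ω = 1} ∪ {ω | η k ω = -1})ᶜ = 0 := by
  have hA : MeasurableSet {ω | η k ω = 1} := hη_meas k (measurableSet_singleton 1)
  have hB : MeasurableSet {ω | η k ω = -1} := hη_meas k (measurableSet_singleton (-1))
  rw [prob_compl_eq_zero_iff (hA.union hB)]
  have hd : Disjoint {ω | η k ω = 1} {ω | η k ω = -1} := by
    rw [Set.disjoint_left]
    rintro ω h1 h2
    simp only [Set.mem_setOf_eq] at h1 h2
    omega
  rw [measure_union hd hB, hη_one k, hη_negone k]
  simp only [one_div]
  exact ENNReal.inv_two_add_inv_two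

lemma sum_dist (hη_meas : ∀ k, Measurable (η k))
    (hη_indep : iIndepFun η ℙ)
    (hη_one : ∀ k, ℙ {ω | η k ω = 1} = 1/2)
    (hη_negone : ∀ k, ℙ {ω | η k ω = -1} = 1/2) (s : Finset ℕ) :
    ∀ t : ℤ, ℙ {ω | ∑ i ∈ s, η i ω = t} = (c s.card t : ℝ≥0∞) * 2⁻¹ ^ s.card := by
  classical
  induction s using Finset.induction_on with
  | empty =>
    intro t
    by_cases h : t = 0
    · subst h
      simp [c_zero]
    · simp [c_zero, h, eq_comm]
  | @insert a s ha ih =>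
    intro t
    set A := {ω | η a ω = 1} with hAdef
    set B := {ω | η a ω = -1} with hBdef
    have hAm : MeasurableSet A := hη_meas a (measurableSet_singleton 1)
    have hBm : MeasurableSet B := hη_meas a (measurableSet_singleton (-1))
    have hEm : MeasurableSet {ω | ∑ i ∈ insert a s, η i ω = t} := by
      have hmeas : Measurable (fun ω => ∑ i ∈ insert a s, η i ω) :=
        Finset.measurable_sum _ (fun i _ => hη_meas i)
      exact hmeas (measurableSet_singleton t)
    set E := {ω | ∑ i ∈ insert a s, η i ω = t} with hE
    have hnull : ℙ (A ∪ B)ᶜ = 0 := eta_null hη_meas hη_one hη_negone a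
    have hsplit : ℙ E = ℙ (E ∩ A) + ℙ (E ∩ B) := by
      have h1 : ℙ (E ∩ (A ∪ B)) + ℙ (E \ (A ∪ B)) = ℙ E :=
        measure_inter_add_diff E (hAm.union hBm)
      have h2 : ℙ (E \ (A ∪ B)) = 0 := measure_mono_null (fun ω hω => hω.2) hnull
      have h3 : E ∩ (A ∪ B) = (E ∩ A) ∪ (E ∩ B) := Set.inter_union_distrib_left E A B
      have hd : Disjoint (E ∩ A) (E ∩ B) := by
        rw [Set.disjoint_left]
        rintro ω ⟨_, h1'⟩ ⟨_, h2'⟩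
        simp only [hAdef, hBdef, Set.mem_setOf_eq] at h1' h2'
        omega
      have h4 : ℙ ((E ∩ A) ∪ (E ∩ B)) = ℙ (E ∩ A) + ℙ (E ∩ B) :=
        measure_union hd (hEm.inter hBm)
      rw [← h1, h2, add_zero, h3, h4]
    have hindep : IndepFun (∑ i ∈ s, η i) (η a) ℙ :=
      hη_indep.indepFun_finset_sum_of_notMem hη_meas ha
    have hEA : E ∩ A = ((∑ i ∈ s, η i) ⁻¹' {t-1}) ∩ ((η a) ⁻¹' {1}) := by
      ext ω
      simp only [Set.mem_inter_iff, Set.mem_setOf_eq, Set.mem_preimage, Set.mem_singleton_iff,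
        hE, hAdef, Finset.sum_insert ha, Finset.sum_apply]
      constructor
      · rintro ⟨h1, h2⟩; exact ⟨by omega, h2⟩
      · rintro ⟨h1, h2⟩; exact ⟨by omega, h2⟩
    have hEB : E ∩ B = ((∑ i ∈ s, η i) ⁻¹' {t+1}) ∩ ((η a) ⁻¹' {-1}) := by
      ext ω
      simp only [Set.mem_inter_iff, Set.mem_setOf_eq, Set.mem_preimage, Set.mem_singleton_iff,
        hE, hBdef, Finset.sum_insert ha, Finset.sum_apply]
      constructor
      · rintro ⟨h1, h2⟩; exact ⟨by omega, h2⟩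
      · rintro ⟨h1, h2⟩; exact ⟨by omega, h2⟩
    have hpre : ∀ u : ℤ, ((∑ i ∈ s, η i) ⁻¹' {u}) = {ω | ∑ i ∈ s, η i ω = u} := by
      intro u; ext ω; simp [Finset.sum_apply]
    have hmulA : ℙ (E ∩ A) = (c s.card (t-1) : ℝ≥0∞) * 2⁻¹ ^ s.card * 2⁻¹ := by
      rw [hEA, hindep.measure_inter_preimage_eq_mul _ _ (measurableSet_singleton _)
        (measurableSet_singleton _), hpre]
      have : (η a) ⁻¹' {1} = {ω | η a ω = 1} := by ext ω; simp
      rw [this, hη_one a, ih (t-1)]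
      rw [one_div]
    have hmulB : ℙ (E ∩ B) = (c s.card (t+1) : ℝ≥0∞) * 2⁻¹ ^ s.card * 2⁻¹ := by
      rw [hEB, hindep.measure_inter_preimage_eq_mul _ _ (measurableSet_singleton _)
        (measurableSet_singleton _), hpre]
      have : (η a) ⁻¹' {-1} = {ω | η a ω = -1} := by ext ω; simp
      rw [this, hη_negone a, ih (t+1)]
      rw [one_div]
    rw [hsplit, hmulA, hmulB, Finset.card_insert_of_notMem ha, c_succ]
    push_cast
    ring

lemma indep_sums (hη_meas : ∀ k, Measurable (η k))
    (hη_indep : iIndepFun η ℙ)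
    {S T : Finset ℕ} (hST : Disjoint S T) :
    IndepFun (fun ω => ∑ i ∈ S, η i ω) (fun ω => ∑ i ∈ T, η i ω) ℙ := by
  classical
  have h := hη_indep.indepFun_finset S T hST hη_meas
  have hgS : Measurable (fun v : ((i : S) → ℤ) => ∑ i, v i) :=
    Finset.measurable_sum _ (fun i _ => measurable_pi_apply i)
  have hgT : Measurable (fun v : ((i : T) → ℤ) => ∑ i, v i) :=
    Finset.measurable_sum _ (fun i _ => measurable_pi_apply i)
  have h2 := h.comp hgS hgT
  have e1 : (fun v : ((i : S) → ℤ) => ∑ i, v i) ∘ (fun a (i : S) => η i a)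
      = fun ω => ∑ i ∈ S, η i ω := by
    funext ω
    simp only [Function.comp_apply]
    exact Finset.sum_coe_sort S (fun i => η i ω)
  have e2 : (fun v : ((i : T) → ℤ) => ∑ i, v i) ∘ (fun a (i : T) => η i a)
      = fun ω => ∑ i ∈ T, η i ω := by
    funext ω
    simp only [Function.comp_apply]
    exact Finset.sum_coe_sort T (fun i => η i ω)
  rwa [e1, e2] at h2


variable {Ω : Type*} [MeasureSpace Ω] [IsProbabilityMeasure (ℙ : Measure Ω)]
  {η : ℕ → Ω → ℤ}

lemma factor_bound (m : ℕ) :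
    (c m 0 : ℝ≥0∞) * 2⁻¹ ^ m ≤ ENNReal.ofReal (1 / Real.sqrt (m+1)) := by
  have hs : (0:ℝ) < Real.sqrt (m+1) := Real.sqrt_pos.2 (by positivity)
  have hreal : (c m 0 : ℝ) * (2⁻¹)^m ≤ 1 / Real.sqrt (m+1) := by
    rw [le_div_iff₀ hs]
    have h2 : (0:ℝ) < 2^m := by positivity
    calc (c m 0 : ℝ) * (2⁻¹)^m * Real.sqrt (m+1)
        = ((c m 0 : ℝ) * Real.sqrt (m+1)) * (2⁻¹)^m := by ring
      _ ≤ 2^m * (2⁻¹)^m := by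
          apply mul_le_mul_of_nonneg_right (c_zero_bound m) (by positivity)
      _ = 1 := by rw [← mul_pow]; norm_num
  have heq : (c m 0 : ℝ≥0∞) * 2⁻¹ ^ m = ENNReal.ofReal ((c m 0 : ℝ) * (2⁻¹)^m) := by
    rw [ENNReal.ofReal_mul (by positivity), ENNReal.ofReal_pow (by norm_num),
      ENNReal.ofReal_natCast]
    congr 1
    rw [show ((2:ℝ)⁻¹) = (2:ℝ)⁻¹ from rfl]
    rw [ENNReal.ofReal_inv_of_pos (by norm_num)]
    norm_num
  rw [heq]
  exact ENNReal.ofReal_le_ofReal hreal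

lemma walk_diff {j k : ℕ} (hjk : j ≤ k) (ω : Ω) :
    walk η k ω - walk η j ω = ∑ i ∈ Finset.Ico (j+1) (k+1), η i ω := by
  rw [walk, walk, ← Finset.sum_Ico_eq_sub _ hjk, ← Finset.map_add_right_Ico, Finset.sum_map]
  simp [addRightEmbedding_apply]

lemma triple_bound (hη_meas : ∀ k, Measurable (η k))
    (hη_indep : iIndepFun η ℙ)
    (hη_one : ∀ k, ℙ {ω | η k ω = 1} = 1/2)
    (hη_negone : ∀ k, ℙ {ω | η k ω = -1} = 1/2)
    {j k l : ℕ} (hjk : j ≤ k) (hkl : k ≤ l) :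
    ℙ {ω | walk η j ω = walk η k ω ∧ walk η k ω = walk η l ω}
      ≤ ENNReal.ofReal (1 / Real.sqrt ((k-j : ℕ)+1)) *
        ENNReal.ofReal (1 / Real.sqrt ((l-k : ℕ)+1)) := by
  set S1 := Finset.Ico (j+1) (k+1) with hS1
  set S2 := Finset.Ico (k+1) (l+1) with hS2
  have hdisj : Disjoint S1 S2 := Finset.Ico_disjoint_Ico_consecutive _ _ _
  have hev : {ω : Ω | walk η j ω = walk η k ω ∧ walk η k ω = walk η l ω}
      = ((fun ω => ∑ i ∈ S1, η i ω) ⁻¹' {0}) ∩ ((fun ω => ∑ i ∈ S2, η i ω) ⁻¹' {0}) := by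
    ext ω
    simp only [Set.mem_setOf_eq, Set.mem_inter_iff, Set.mem_preimage, Set.mem_singleton_iff]
    rw [← walk_diff hjk ω, ← walk_diff hkl ω]
    constructor
    · rintro ⟨h1, h2⟩; constructor <;> omega
    · rintro ⟨h1, h2⟩; constructor <;> omega
  rw [hev]
  have hind := indep_sums hη_meas hη_indep hdisj
  rw [hind.measure_inter_preimage_eq_mul _ _ (measurableSet_singleton _)
    (measurableSet_singleton _)]
  have hp1 : ((fun ω => ∑ i ∈ S1, η i ω) ⁻¹' {0}) = {ω | ∑ i ∈ S1, η i ω = 0} := by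
    ext ω; simp
  have hp2 : ((fun ω => ∑ i ∈ S2, η i ω) ⁻¹' {0}) = {ω | ∑ i ∈ S2, η i ω = 0} := by
    ext ω; simp
  rw [hp1, hp2, sum_dist hη_meas hη_indep hη_one hη_negone S1 0,
    sum_dist hη_meas hη_indep hη_one hη_negone S2 0]
  have hc1 : S1.card = k - j := by rw [hS1, Nat.card_Ico]; omega
  have hc2 : S2.card = l - k := by rw [hS2, Nat.card_Ico]; omega
  rw [hc1, hc2]
  exact mul_le_mul' (factor_bound _) (factor_bound _)



def sort3 (p : ℕ × ℕ × ℕ) : ℕ × ℕ × ℕ :=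
  (min p.1 (min p.2.1 p.2.2), p.1 + p.2.1 + p.2.2 - min p.1 (min p.2.1 p.2.2)
    - max p.1 (max p.2.1 p.2.2), max p.1 (max p.2.1 p.2.2))

lemma sort3_cases (x y z : ℕ) : sort3 (x,y,z) = (x,y,z) ∨ sort3 (x,y,z) = (x,z,y)
    ∨ sort3 (x,y,z) = (y,x,z) ∨ sort3 (x,y,z) = (y,z,x)
    ∨ sort3 (x,y,z) = (z,x,y) ∨ sort3 (x,y,z) = (z,y,x) := by
  rcases le_total x y with h1|h1 <;> rcases le_total y z with h2|h2 <;>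
    rcases le_total x z with h3|h3 <;>
    simp [sort3, min_def, max_def, h1, h2, h3, Prod.ext_iff] <;> omega

lemma sort3_sorted (p : ℕ × ℕ × ℕ) :
    (sort3 p).1 ≤ (sort3 p).2.1 ∧ (sort3 p).2.1 ≤ (sort3 p).2.2 := by
  obtain ⟨x, y, z⟩ := p
  rcases le_total x y with h1|h1 <;> rcases le_total y z with h2|h2 <;>
    rcases le_total x z with h3|h3 <;>
    simp [sort3, min_def, max_def, h1, h2, h3] <;> omega

lemma sort3_fiber {b q : ℕ × ℕ × ℕ} (h : sort3 q = b) :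
    q ∈ ({(b.1,b.2.1,b.2.2), (b.1,b.2.2,b.2.1), (b.2.1,b.1,b.2.2), (b.2.1,b.2.2,b.1),
      (b.2.2,b.1,b.2.1), (b.2.2,b.2.1,b.1)} : Finset (ℕ×ℕ×ℕ)) := by
  obtain ⟨x, y, z⟩ := q
  rcases sort3_cases x y z with hc|hc|hc|hc|hc|hc <;>
    rw [hc] at h <;> subst h <;>
    simp [Finset.mem_insert, Prod.ext_iff] <;> omega

lemma card_le_six {α : Type*} [DecidableEq α] (a b c d e f : α) :
    ({a,b,c,d,e,f} : Finset α).card ≤ 6 := by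
  apply le_trans (Finset.card_insert_le _ _)
  have h1 : ({b,c,d,e,f} : Finset α).card ≤ 5 := by
    apply le_trans (Finset.card_insert_le _ _)
    have h2 : ({c,d,e,f} : Finset α).card ≤ 4 := by
      apply le_trans (Finset.card_insert_le _ _)
      have h3 : ({d,e,f} : Finset α).card ≤ 3 := by
        apply le_trans (Finset.card_insert_le _ _)
        have h4 : ({e,f} : Finset α).card ≤ 2 := by
          apply le_trans (Finset.card_insert_le _ _)
          simp
        omega
      omega
    omega
  omega

def triples (n : ℕ) : Finset (ℕ×ℕ×ℕ) :=
  ((Finset.range (n+1)) ×ˢ (Finset.range (n+1)) ×ˢ (Finset.range (n+1))).filter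
    (fun p => p.1 ≤ p.2.1 ∧ p.2.1 ≤ p.2.2)

variable {Ω : Type*}

def Tcount (η : ℕ → Ω → ℤ) (n : ℕ) (ω : Ω) : ℕ :=
  ((triples n).filter (fun p => walk η p.1 ω = walk η p.2.1 ω ∧
    walk η p.2.1 ω = walk η p.2.2 ω)).card

lemma cube_le (η : ℕ → Ω → ℤ) (n : ℕ) (y : ℤ) (ω : Ω) :
    (localTime η n y ω)^3 ≤ 6 * Tcount η n ω := by
  classical
  set A := (Finset.range (n+1)).filter (fun k => walk η k ω = y) with hA
  have hAmem : ∀ a ∈ A, a ≤ n ∧ walk η a ω = y := by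
    intro a hamem
    rw [hA, Finset.mem_filter, Finset.mem_range] at hamem
    exact ⟨by omega, hamem.2⟩
  have hcard : (A ×ˢ (A ×ˢ A)).card = (localTime η n y ω)^3 := by
    simp only [Finset.card_product, localTime, hA]
    ring
  rw [← hcard]
  apply Finset.card_le_mul_card_image_of_maps_to (f := sort3)
  · -- maps to
    intro p hp
    rw [Finset.mem_product, Finset.mem_product] at hp
    obtain ⟨hp1, hp2, hp3⟩ := hp
    have hmem : ∀ q : ℕ×ℕ×ℕ, q.1 ∈ A → q.2.1 ∈ A → q.2.2 ∈ A →
        (sort3 q).1 ∈ A ∧ (sort3 q).2.1 ∈ A ∧ (sort3 q).2.2 ∈ A := by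
      rintro ⟨x, u, z⟩ h1 h2 h3
      rcases sort3_cases x u z with hc|hc|hc|hc|hc|hc <;> rw [hc] <;>
        exact ⟨by assumption, by assumption, by assumption⟩
    obtain ⟨m1, m2, m3⟩ := hmem p hp1 hp2 hp3
    have hs := sort3_sorted p
    rw [Finset.mem_filter, triples, Finset.mem_filter, Finset.mem_product, Finset.mem_product]
    obtain ⟨w1, e1⟩ := hAmem _ m1
    obtain ⟨w2, e2⟩ := hAmem _ m2
    obtain ⟨w3, e3⟩ := hAmem _ m3
    refine ⟨⟨⟨?_, ?_, ?_⟩, hs⟩, ?_, ?_⟩ <;>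
      first
        | (rw [Finset.mem_range]; omega)
        | (rw [e1, e2])
        | (rw [e2, e3])
  · -- fibers
    intro b _
    have hsub : (A ×ˢ A ×ˢ A).filter (fun q => sort3 q = b) ⊆
        ({(b.1,b.2.1,b.2.2), (b.1,b.2.2,b.2.1), (b.2.1,b.1,b.2.2), (b.2.1,b.2.2,b.1),
        (b.2.2,b.1,b.2.1), (b.2.2,b.2.1,b.1)} : Finset (ℕ×ℕ×ℕ)) := by
      intro q hq
      rw [Finset.mem_filter] at hq
      exact sort3_fiber hq.2
    exact le_trans (Finset.card_le_card hsub) (card_le_six _ _ _ _ _ _)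


lemma sum_inv_sqrt : ∀ m : ℕ, ∑ d ∈ Finset.range m, 1/Real.sqrt (d+1) ≤ 2*Real.sqrt m := by
  intro m
  induction m with
  | zero => simp
  | succ m ih =>
    rw [Finset.sum_range_succ]
    have hb0 : (0:ℝ) < Real.sqrt (m+1) := Real.sqrt_pos.2 (by positivity)
    have ha0 : (0:ℝ) ≤ Real.sqrt m := Real.sqrt_nonneg _
    have hab : Real.sqrt m ≤ Real.sqrt (m+1) := Real.sqrt_le_sqrt (by push_cast; linarith)
    have hsq1 : Real.sqrt m ^ 2 = (m:ℝ) := Real.sq_sqrt (by positivity)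
    have hsq2 : Real.sqrt (m+1) ^ 2 = (m:ℝ)+1 := by
      rw [show ((m:ℕ):ℝ)+1 = (((m+1:ℕ)):ℝ) by push_cast; ring]
      exact Real.sq_sqrt (by positivity)
    have h1b : 1/Real.sqrt (m+1) ≤ 2*Real.sqrt (m+1) - 2*Real.sqrt m := by
      rw [div_le_iff₀ hb0]
      nlinarith [sq_nonneg (Real.sqrt (m+1) - Real.sqrt m)]
    have : (((m+1:ℕ)):ℝ) = (m:ℝ)+1 := by push_cast; ring
    rw [this]
    calc ∑ d ∈ Finset.range m, 1/Real.sqrt (d+1) + 1/Real.sqrt (m+1)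
        ≤ 2*Real.sqrt m + (2*Real.sqrt (m+1) - 2*Real.sqrt m) := add_le_add ih h1b
      _ = 2*Real.sqrt ((m:ℝ)+1) := by ring


end SLTProof

open SLTProof

/-- In `P`-probability, `n^{-3/4} · sup_{y ∈ ℤ} N_n(y) → 0`: for every `ε > 0`,
`P(sup_y N_n(y) > ε n^{3/4}) → 0` as `n → ∞`. -/
theorem sup_localTime_tendsto_zero_in_probability
    {Ω : Type*} [MeasureSpace Ω] [IsProbabilityMeasure (ℙ : Measure Ω)]
    (η : ℕ → Ω → ℤ)
    (hη_meas : ∀ k, Measurable (η k))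
    (hη_indep : iIndepFun η ℙ)
    (hη_one : ∀ k, ℙ {ω | η k ω = 1} = 1/2)
    (hη_negone : ∀ k, ℙ {ω | η k ω = -1} = 1/2) :
    ∀ ε > (0 : ℝ),
      Tendsto (fun n : ℕ =>
          ℙ {ω | ∃ y : ℤ, (localTime η n y ω : ℝ) > ε * (n : ℝ) ^ (3/4 : ℝ)})
        atTop (nhds 0) := by
  intro ε hε
  classical
  have hwm : ∀ m : ℕ, Measurable (fun ω : Ω => walk η m ω) := by
    intro m
    apply Finset.measurable_sum
    intro i _
    exact hη_meas _
  have key : ∀ n : ℕ, 1 ≤ n →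
      ℙ {ω | ∃ y : ℤ, (localTime η n y ω : ℝ) > ε * (n : ℝ) ^ (3/4 : ℝ)}
        ≤ ENNReal.ofReal ((96 / ε^3) * (n:ℝ)^(-(1/4):ℝ)) := by
    intro n hn
    have hNpos : (0:ℝ) < n := by exact_mod_cast hn
    set Ep : ℕ×ℕ×ℕ → Set Ω := fun p => {ω | walk η p.1 ω = walk η p.2.1 ω ∧
      walk η p.2.1 ω = walk η p.2.2 ω} with hEpdef
    have hEp : ∀ p, MeasurableSet (Ep p) := by
      intro p
      have h1 : ∀ a b : ℕ, MeasurableSet {ω : Ω | walk η a ω = walk η b ω} := by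
        intro a b
        have : {ω : Ω | walk η a ω = walk η b ω}
            = (fun ω => walk η a ω - walk η b ω) ⁻¹' {0} := by
          ext ω; simp [sub_eq_zero]
        rw [this]
        exact ((hwm a).sub (hwm b)) (measurableSet_singleton 0)
      have : Ep p = {ω : Ω | walk η p.1 ω = walk η p.2.1 ω} ∩
          {ω : Ω | walk η p.2.1 ω = walk η p.2.2 ω} := rfl
      rw [this]
      exact (h1 _ _).inter (h1 _ _)
    set T : Ω → ℝ≥0∞ := fun ω => (Tcount η n ω : ℝ≥0∞) with hTdef
    have hTsum : ∀ ω, T ω = ∑ p ∈ triples n, Set.indicator (Ep p) (fun _ => (1:ℝ≥0∞)) ω := by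
      intro ω
      rw [hTdef]
      simp only [Tcount, Finset.card_filter]
      push_cast
      apply Finset.sum_congr rfl
      intro p _
      rw [Set.indicator_apply]
      simp only [hEpdef, Set.mem_setOf_eq]
    have hTm : Measurable T := by
      have : T = fun ω => ∑ p ∈ triples n, Set.indicator (Ep p) (fun _ => (1:ℝ≥0∞)) ω :=
        funext hTsum
      rw [this]
      exact Finset.measurable_sum _ (fun p _ => measurable_const.indicator (hEp p))
    -- lintegral bound
    have hlint : ∫⁻ ω, T ω ≤ ENNReal.ofReal (4*((n:ℝ)+1)^2) := by
      have h1 : ∫⁻ ω, T ω = ∑ p ∈ triples n, ℙ (Ep p) := by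
        rw [lintegral_congr hTsum,
          lintegral_finset_sum _ (fun p _ => measurable_const.indicator (hEp p))]
        apply Finset.sum_congr rfl
        intro p _
        rw [lintegral_indicator_const (hEp p), one_mul]
      set f : ℕ → ℝ≥0∞ := fun d => ENNReal.ofReal (1 / Real.sqrt (d+1)) with hfdef
      have h2 : ∑ p ∈ triples n, ℙ (Ep p)
          ≤ ∑ p ∈ triples n, f (p.2.1 - p.1) * f (p.2.2 - p.2.1) := by
        apply Finset.sum_le_sum
        intro p hp
        rw [triples, Finset.mem_filter] at hp
        exact triple_bound hη_meas hη_indep hη_one hη_negone hp.2.1 hp.2.2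
      set φ : ℕ×ℕ×ℕ → ℕ×ℕ×ℕ := fun p => (p.1, p.2.1 - p.1, p.2.2 - p.2.1) with hφdef
      have hmem : ∀ p ∈ triples n, p.1 ≤ n ∧ p.1 ≤ p.2.1 ∧ p.2.1 ≤ p.2.2 ∧ p.2.2 ≤ n := by
        intro p hp
        rw [triples, Finset.mem_filter, Finset.mem_product, Finset.mem_product] at hp
        obtain ⟨⟨hr1, hr2, hr3⟩, hs1, hs2⟩ := hp
        rw [Finset.mem_range] at hr1 hr2 hr3
        omega
      have h3 : ∑ p ∈ triples n, f (p.2.1 - p.1) * f (p.2.2 - p.2.1)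
          = ∑ q ∈ (triples n).image φ, f q.2.1 * f q.2.2 := by
        rw [Finset.sum_image]
        intro p hp q hq h
        obtain ⟨a1, a2, a3, a4⟩ := hmem p hp
        obtain ⟨b1, b2, b3, b4⟩ := hmem q hq
        rw [hφdef, Prod.ext_iff, Prod.ext_iff] at h
        simp only at h
        obtain ⟨e1, e2, e3⟩ := h
        rw [Prod.ext_iff, Prod.ext_iff]
        refine ⟨by omega, by omega, by omega⟩
      have h4 : (triples n).image φ ⊆
          (Finset.range (n+1)) ×ˢ (Finset.range (n+1)) ×ˢ (Finset.range (n+1)) := by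
        intro q hq
        rw [Finset.mem_image] at hq
        obtain ⟨p, hp, rfl⟩ := hq
        obtain ⟨a1, a2, a3, a4⟩ := hmem p hp
        rw [Finset.mem_product, Finset.mem_product]
        refine ⟨?_, ?_, ?_⟩ <;> rw [Finset.mem_range] <;> simp only [hφdef] <;> omega
      have h5 : ∑ q ∈ (triples n).image φ, f q.2.1 * f q.2.2
          ≤ ∑ q ∈ (Finset.range (n+1)) ×ˢ (Finset.range (n+1)) ×ˢ (Finset.range (n+1)),
            f q.2.1 * f q.2.2 :=
        Finset.sum_le_sum_of_subset h4
      have h6 : ∑ q ∈ (Finset.range (n+1)) ×ˢ (Finset.range (n+1)) ×ˢ (Finset.range (n+1)),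
            f q.2.1 * f q.2.2
          = (n+1 : ℕ) * ((∑ d ∈ Finset.range (n+1), f d) * (∑ d ∈ Finset.range (n+1), f d)) := by
        rw [Finset.sum_product]
        have inner : ∀ a : ℕ, ∑ q ∈ (Finset.range (n+1)) ×ˢ (Finset.range (n+1)),
            f q.1 * f q.2 = (∑ d ∈ Finset.range (n+1), f d) * (∑ d ∈ Finset.range (n+1), f d) := by
          intro a
          rw [Finset.sum_product, Finset.sum_mul_sum]
        simp only
        rw [Finset.sum_congr rfl (fun a _ => by rw [Finset.sum_product, ← Finset.sum_mul_sum])]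
        rw [Finset.sum_const, Finset.card_range, nsmul_eq_mul]
      have h7 : ∑ d ∈ Finset.range (n+1), f d ≤ ENNReal.ofReal (2*Real.sqrt (n+1)) := by
        rw [hfdef]
        rw [← ENNReal.ofReal_sum_of_nonneg (fun d _ => by positivity)]
        apply ENNReal.ofReal_le_ofReal
        have := sum_inv_sqrt (n+1)
        calc ∑ d ∈ Finset.range (n+1), 1/Real.sqrt ((d:ℝ)+1)
            ≤ 2*Real.sqrt ((n+1 : ℕ):ℝ) := this
          _ = 2*Real.sqrt ((n:ℝ)+1) := by push_cast; ring_nf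
      calc ∫⁻ ω, T ω = ∑ p ∈ triples n, ℙ (Ep p) := h1
        _ ≤ ∑ p ∈ triples n, f (p.2.1 - p.1) * f (p.2.2 - p.2.1) := h2
        _ = ∑ q ∈ (triples n).image φ, f q.2.1 * f q.2.2 := h3
        _ ≤ _ := h5
        _ = (n+1 : ℕ) * ((∑ d ∈ Finset.range (n+1), f d) * (∑ d ∈ Finset.range (n+1), f d)) := h6
        _ ≤ (n+1 : ℕ) * (ENNReal.ofReal (2*Real.sqrt (n+1)) * ENNReal.ofReal (2*Real.sqrt (n+1))) := by
            exact mul_le_mul' le_rfl (mul_le_mul' h7 h7)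
        _ = ENNReal.ofReal (4*((n:ℝ)+1)^2) := by
            rw [← ENNReal.ofReal_mul (by positivity), ← ENNReal.ofReal_natCast (n+1),
              ← ENNReal.ofReal_mul (by positivity)]
            congr 1
            have hs : Real.sqrt ((n:ℝ)+1) * Real.sqrt ((n:ℝ)+1) = (n:ℝ)+1 :=
              Real.mul_self_sqrt (by positivity)
            push_cast
            nlinarith [hs]
    -- event inclusion
    set aR : ℝ := ε^3 * (n:ℝ)^((9:ℝ)/4) / 6 with haR
    have haRpos : 0 < aR := by
      rw [haR]
      have : (0:ℝ) < (n:ℝ)^((9:ℝ)/4) := Real.rpow_pos_of_pos hNpos _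
      positivity
    have hsub : {ω | ∃ y : ℤ, (localTime η n y ω : ℝ) > ε * (n : ℝ) ^ (3/4 : ℝ)}
        ⊆ {ω | ENNReal.ofReal aR ≤ T ω} := by
      rintro ω ⟨y, hy⟩
      have hN0 : (0:ℝ) ≤ ε * (n:ℝ)^((3:ℝ)/4) := by
        have : (0:ℝ) < (n:ℝ)^((3:ℝ)/4) := Real.rpow_pos_of_pos hNpos _
        positivity
      have hy' : ε * (n:ℝ)^((3:ℝ)/4) < (localTime η n y ω : ℝ) := by
        convert hy using 3
      have h1 : (ε * (n:ℝ)^((3:ℝ)/4))^3 < ((localTime η n y ω : ℝ))^3 :=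
        pow_lt_pow_left₀ hy' hN0 (by norm_num)
      have h2 : (ε * (n:ℝ)^((3:ℝ)/4))^3 = ε^3 * (n:ℝ)^((9:ℝ)/4) := by
        rw [mul_pow]
        congr 1
        rw [← Real.rpow_natCast ((n:ℝ)^((3:ℝ)/4)) 3, ← Real.rpow_mul (le_of_lt hNpos)]
        norm_num
      have hc : ((localTime η n y ω : ℝ))^3 ≤ 6 * (Tcount η n ω : ℝ) := by
        exact_mod_cast cube_le η n y ω
      have h3 : aR ≤ (Tcount η n ω : ℝ) := by
        rw [haR, div_le_iff₀ (by norm_num : (0:ℝ) < 6)]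
        nlinarith
      show ENNReal.ofReal aR ≤ T ω
      rw [hTdef]
      calc ENNReal.ofReal aR ≤ ENNReal.ofReal ((Tcount η n ω : ℝ)) :=
            ENNReal.ofReal_le_ofReal h3
        _ = (Tcount η n ω : ℝ≥0∞) := ENNReal.ofReal_natCast _
    -- markov
    have hmark : ℙ {ω | ENNReal.ofReal aR ≤ T ω} ≤ (∫⁻ ω, T ω) / ENNReal.ofReal aR := by
      rw [ENNReal.le_div_iff_mul_le (Or.inl (by simp [ENNReal.ofReal_eq_zero]; linarith))
        (Or.inl ENNReal.ofReal_ne_top)]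
      rw [mul_comm]
      exact mul_meas_ge_le_lintegral₀ hTm.aemeasurable _
    -- final real computation
    have hfinal : 4*((n:ℝ)+1)^2 / aR ≤ (96 / ε^3) * (n:ℝ)^(-(1/4):ℝ) := by
      rw [div_le_iff₀ haRpos, haR]
      have hr2 : (n:ℝ)^(-(1/4):ℝ) * (n:ℝ)^((9:ℝ)/4) = (n:ℝ)^(2:ℝ) := by
        rw [← Real.rpow_add hNpos]
        norm_num
      have hr3 : (n:ℝ)^(2:ℝ) = (n:ℝ)^(2:ℕ) := by
        rw [← Real.rpow_natCast (n:ℝ) 2]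
        norm_num
      have hε3 : (0:ℝ) < ε^3 := by positivity
      have hexp : (96 / ε^3) * (n:ℝ)^(-(1/4):ℝ) * (ε^3 * (n:ℝ)^((9:ℝ)/4) / 6)
          = 16 * ((n:ℝ)^(-(1/4):ℝ) * (n:ℝ)^((9:ℝ)/4)) := by
        field_simp
        ring
      rw [hexp, hr2, hr3]
      have hN1 : (1:ℝ) ≤ (n:ℝ) := by exact_mod_cast hn
      nlinarith
    calc ℙ {ω | ∃ y : ℤ, (localTime η n y ω : ℝ) > ε * (n : ℝ) ^ (3/4 : ℝ)}
        ≤ ℙ {ω | ENNReal.ofReal aR ≤ T ω} := measure_mono hsub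
      _ ≤ (∫⁻ ω, T ω) / ENNReal.ofReal aR := hmark
      _ ≤ ENNReal.ofReal (4*((n:ℝ)+1)^2) / ENNReal.ofReal aR :=
          ENNReal.div_le_div_right hlint _
      _ = ENNReal.ofReal (4*((n:ℝ)+1)^2 / aR) := (ENNReal.ofReal_div_of_pos haRpos).symm
      _ ≤ ENNReal.ofReal ((96 / ε^3) * (n:ℝ)^(-(1/4):ℝ)) := ENNReal.ofReal_le_ofReal hfinal
  -- squeeze
  have hreal : Tendsto (fun n:ℕ => (96/ε^3) * (n:ℝ)^(-(1/4):ℝ)) atTop (nhds 0) := by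
    have h := (tendsto_rpow_neg_atTop (y := (1/4:ℝ)) (by norm_num)).comp
      (tendsto_natCast_atTop_atTop (R := ℝ))
    have h2 := h.const_mul (96/ε^3)
    simpa using h2
  have hlim : Tendsto (fun n:ℕ => ENNReal.ofReal ((96/ε^3) * (n:ℝ)^(-(1/4):ℝ))) atTop (nhds 0) := by
    have h2 := ENNReal.tendsto_ofReal hreal
    simpa using h2
  apply tendsto_of_tendsto_of_tendsto_of_le_of_le' tendsto_const_nhds hlim
  · filter_upwards with n using zero_le
  · filter_upwards [eventually_ge_atTop 1] with n hn using key n hn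
end
end

section
/- P-almost surely, T_n / n converges to 1 + m as n → ∞. -/
open MeasureTheory ProbabilityTheory Filter

noncomputable section

/-- The random times `T_n = n + Σ_{y∈ℤ} Σ_{i=1}^{N_{n−1}(y)} ξ_i^{(y)}`, with `T_0 = 0`.
Since `|Y_k| ≤ k ≤ n - 1`, the sum over `y ∈ ℤ` reduces to the sum over `y ∈ [-n, n]`. -/
def hitTime {Ω : Type*} (η : ℕ → Ω → ℤ) (ξ : ℕ → ℤ → Ω → ℕ) : ℕ → Ω → ℕ
  | 0, _ => 0
  | n + 1, ω => (n + 1) + ∑ y ∈ Finset.Icc (-(n + 1 : ℤ)) (n + 1),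
      ∑ i ∈ Finset.Icc 1 (localTime η n y ω), ξ i y ω


open scoped ENNReal NNReal Topology

/-! Path versions -/

def wkP (a : ℕ → ℤ) (n : ℕ) : ℤ := ∑ k ∈ Finset.range n, a (k + 1)

def ltP (a : ℕ → ℤ) (n : ℕ) (y : ℤ) : ℕ :=
  ((Finset.range (n + 1)).filter fun k => wkP a k = y).card

def hitP (a : ℕ → ℤ) (x : ℕ × ℤ → ℕ) : ℕ → ℕ
  | 0 => 0
  | n + 1 => (n + 1) + ∑ y ∈ Finset.Icc (-(n + 1 : ℤ)) (n + 1),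
      ∑ i ∈ Finset.Icc 1 (ltP a n y), x (i, y)

def sigP (a : ℕ → ℤ) (k : ℕ) : ℕ × ℤ := (ltP a k (wkP a k), wkP a k)

lemma hitTime_eq_hitP {Ω : Type*} (η : ℕ → Ω → ℤ) (ξ : ℕ → ℤ → Ω → ℕ) (n : ℕ) (ω : Ω) :
    hitTime η ξ n ω = hitP (fun k => η k ω) (fun iy => ξ iy.1 iy.2 ω) n := by
  cases n <;> rfl

lemma ltP_le (a : ℕ → ℤ) (n : ℕ) (y : ℤ) : ltP a n y ≤ n + 1 :=
  (Finset.card_filter_le _ _).trans (by simp)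

lemma ltP_mono (a : ℕ → ℤ) {m n : ℕ} (h : m ≤ n) (y : ℤ) : ltP a m y ≤ ltP a n y :=
  Finset.card_le_card (Finset.filter_subset_filter _ (Finset.range_subset_range.2 (by omega)))

lemma ltP_succ (a : ℕ → ℤ) (n : ℕ) (y : ℤ) :
    ltP a (n + 1) y = ltP a n y + (if wkP a (n + 1) = y then 1 else 0) := by
  unfold ltP
  rw [Finset.range_add_one, Finset.filter_insert]
  split_ifs with h
  · rw [Finset.card_insert_of_notMem (by simp)]
  · simp

lemma ltP_zero (a : ℕ → ℤ) (y : ℤ) :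
    ltP a 0 y = if wkP a 0 = y then 1 else 0 := by
  unfold ltP
  simp [Finset.filter_singleton, Finset.range_one]
  split_ifs <;> simp

lemma ltP_pos (a : ℕ → ℤ) (k : ℕ) : 1 ≤ ltP a k (wkP a k) :=
  Finset.card_pos.2 ⟨k, by simp [Finset.mem_filter]⟩

lemma ltP_lt (a : ℕ → ℤ) {k l : ℕ} (hkl : k < l) :
    ltP a k (wkP a l) < ltP a l (wkP a l) := by
  apply Finset.card_lt_card
  constructor
  · exact Finset.filter_subset_filter _ (Finset.range_subset_range.2 (by omega))
  · intro hsub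
    have : l ∈ (Finset.range (l + 1)).filter fun j => wkP a j = wkP a l := by
      simp
    have := hsub this
    simp [Finset.mem_filter] at this
    omega

lemma sigP_inj (a : ℕ → ℤ) : Function.Injective (sigP a) := by
  intro k l h
  by_contra hne
  rcases Nat.lt_or_ge k l with hlt | hge
  · have h2 : wkP a k = wkP a l := congrArg Prod.snd h
    have h1 : ltP a k (wkP a k) = ltP a l (wkP a l) := congrArg Prod.fst h
    rw [h2] at h1
    exact absurd h1 (Nat.ne_of_lt (ltP_lt a hlt))
  · have hlt : l < k := by omega
    have h2 : wkP a l = wkP a k := (congrArg Prod.snd h).symm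
    have h1 : ltP a l (wkP a l) = ltP a k (wkP a k) := (congrArg Prod.fst h).symm
    rw [h2] at h1
    exact absurd h1 (Nat.ne_of_lt (ltP_lt a hlt))

lemma exists_visit (a : ℕ → ℤ) (y : ℤ) (i : ℕ) :
    ∀ n, 1 ≤ i → i ≤ ltP a n y → ∃ k ≤ n, wkP a k = y ∧ ltP a k y = i := by
  intro n
  induction n with
  | zero =>
    intro h1 h2
    have h0 : ltP a 0 y = if wkP a 0 = y then 1 else 0 := ltP_zero a y
    refine ⟨0, le_refl _, ?_, ?_⟩ <;>
    · split_ifs at h0 with h <;> omega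
  | succ n ih =>
    intro h1 h2
    rcases le_or_gt i (ltP a n y) with hle | hlt
    · obtain ⟨k, hk, h⟩ := ih h1 hle
      exact ⟨k, by omega, h⟩
    · rw [ltP_succ] at h2
      split_ifs at h2 with h
      · exact ⟨n + 1, le_refl _, h, by rw [ltP_succ]; simp [h]; omega⟩
      · omega

lemma wk_bound (a : ℕ → ℤ) (ha : ∀ k, a (k + 1) = 1 ∨ a (k + 1) = -1) (k : ℕ) :
    -(k : ℤ) ≤ wkP a k ∧ wkP a k ≤ k := by
  induction k with
  | zero => simp [wkP]
  | succ k ih =>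
    have h : wkP a (k + 1) = wkP a k + a (k + 1) := by
      unfold wkP; rw [Finset.sum_range_succ]
    rcases ha k with h1 | h1 <;> rw [h, h1] <;> push_cast <;> omega

lemma sum_sig_eq (a : ℕ → ℤ) (ha : ∀ k, a (k + 1) = 1 ∨ a (k + 1) = -1)
    (x : ℕ × ℤ → ℕ) (n : ℕ) :
    ∑ y ∈ Finset.Icc (-(n + 1 : ℤ)) (n + 1), ∑ i ∈ Finset.Icc 1 (ltP a n y), x (i, y)
      = ∑ k ∈ Finset.range (n + 1), x (sigP a k) := by
  rw [Finset.sum_sigma']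
  refine (Finset.sum_bij (fun (k : ℕ) (_ : k ∈ Finset.range (n + 1)) =>
      (⟨wkP a k, ltP a k (wkP a k)⟩ : Σ _ : ℤ, ℕ)) ?_ ?_ ?_ ?_).symm
  · intro k hk
    simp only [Finset.mem_range] at hk
    simp only [Finset.mem_sigma, Finset.mem_Icc]
    obtain ⟨hb1, hb2⟩ := wk_bound a ha k
    refine ⟨⟨?_, ?_⟩, ltP_pos a k, ltP_mono a (by omega) _⟩ <;> push_cast <;> omega
  · intro k hk l hl h
    have : sigP a k = sigP a l := by
      simp only [sigP]
      have h1 : wkP a k = wkP a l := congrArg Sigma.fst h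
      have h2 : ltP a k (wkP a k) = ltP a l (wkP a l) := by
        have := congrArg (fun s : Σ _ : ℤ, ℕ => s.2) h
        simpa using this
      exact Prod.ext h2 h1
    exact sigP_inj a this
  · rintro ⟨y, i⟩ hyi
    simp only [Finset.mem_sigma, Finset.mem_Icc] at hyi
    obtain ⟨k, hk, hw, hl⟩ := exists_visit a y i n hyi.2.1 hyi.2.2
    refine ⟨k, Finset.mem_range.2 (by omega), ?_⟩
    simp only [hw, hl]
  · intro k hk
    rfl

lemma hitP_succ (a : ℕ → ℤ) (ha : ∀ k, a (k + 1) = 1 ∨ a (k + 1) = -1)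
    (x : ℕ × ℤ → ℕ) (n : ℕ) :
    hitP a x (n + 1) = (n + 1) + ∑ k ∈ Finset.range (n + 1), x (sigP a k) := by
  rw [← sum_sig_eq a ha x n]; rfl

lemma measurable_wkP (n : ℕ) : Measurable (fun a : ℕ → ℤ => wkP a n) := by
  unfold wkP
  exact Finset.measurable_sum _ (fun k _ => measurable_pi_apply (k + 1))

lemma measurable_ltP (n : ℕ) (y : ℤ) : Measurable (fun a : ℕ → ℤ => ltP a n y) := by
  have : (fun a : ℕ → ℤ => ltP a n y)
      = fun a => ∑ k ∈ Finset.range (n + 1), if wkP a k = y then 1 else 0 := by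
    funext a
    exact Finset.card_filter _ _
  rw [this]
  refine Finset.measurable_sum _ (fun k _ => ?_)
  exact Measurable.ite (measurableSet_eq_fun (measurable_wkP k) measurable_const)
    measurable_const measurable_const

lemma sum_Icc_trunc {N M : ℕ} (h : N ≤ M) (f : ℕ → ℕ) :
    ∑ i ∈ Finset.Icc 1 N, f i = ∑ i ∈ Finset.Icc 1 M, if i ≤ N then f i else 0 := by
  rw [← Finset.sum_subset (Finset.Icc_subset_Icc_right h)
    (fun i hi hni => if_neg (by simp [Finset.mem_Icc] at hi hni ⊢; omega))]
  exact Finset.sum_congr rfl fun i hi => (if_pos (Finset.mem_Icc.1 hi).2).symm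

lemma measurable_hitP (n : ℕ) :
    Measurable (fun z : (ℕ → ℤ) × ((ℕ × ℤ) → ℕ) => hitP z.1 z.2 n) := by
  cases n with
  | zero => exact measurable_const
  | succ n =>
    have : (fun z : (ℕ → ℤ) × ((ℕ × ℤ) → ℕ) => hitP z.1 z.2 (n + 1))
        = fun z => (n + 1) + ∑ y ∈ Finset.Icc (-(n + 1 : ℤ)) (n + 1),
            ∑ i ∈ Finset.Icc 1 (n + 1), if i ≤ ltP z.1 n y then z.2 (i, y) else 0 := by
      funext z
      show (n + 1) + ∑ y ∈ Finset.Icc (-(n + 1 : ℤ)) (n + 1),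
          ∑ i ∈ Finset.Icc 1 (ltP z.1 n y), z.2 (i, y) = _
      refine congrArg (fun s => (n + 1) + s) ?_
      exact Finset.sum_congr rfl fun y _ => sum_Icc_trunc (ltP_le z.1 n y) _
    rw [this]
    refine Measurable.add measurable_const ?_
    refine Finset.measurable_sum _ (fun y _ => ?_)
    refine Finset.measurable_sum _ (fun i _ => ?_)
    refine Measurable.ite ?_ ?_ measurable_const
    · exact measurableSet_le measurable_const ((measurable_ltP n y).comp measurable_fst)
    · exact (measurable_pi_apply (i, y)).comp measurable_snd

lemma geom_summable {p : ℝ} (hp0 : 0 < p) (hp1 : p < 1) :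
    Summable (fun n : ℕ => (n : ℝ) * (p * (1 - p) ^ n)) := by
  have h : Summable (fun n : ℕ => (n : ℝ) * (1 - p) ^ n) := by
    have := summable_pow_mul_geometric_of_norm_lt_one (R := ℝ) 1
      (r := 1 - p) (by rw [Real.norm_eq_abs]; rw [abs_lt]; constructor <;> linarith)
    simpa using this
  have := h.mul_left p
  refine this.congr fun n => ?_
  ring

lemma geom_tsum {p : ℝ} (hp0 : 0 < p) (hp1 : p < 1) :
    ∑' n : ℕ, (n : ℝ) * (p * (1 - p) ^ n) = (1 - p) / p := by
  have hnorm : ‖(1 - p : ℝ)‖ < 1 := by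
    rw [Real.norm_eq_abs, abs_lt]; constructor <;> linarith
  have h := tsum_coe_mul_geometric_of_norm_lt_one (𝕜 := ℝ) hnorm
  calc ∑' n : ℕ, (n : ℝ) * (p * (1 - p) ^ n)
      = ∑' n : ℕ, p * ((n : ℝ) * (1 - p) ^ n) := by
        congr 1; ext n; ring
    _ = p * ∑' n : ℕ, (n : ℝ) * (1 - p) ^ n := tsum_mul_left
    _ = p * ((1 - p) / (1 - (1 - p)) ^ 2) := by rw [h]
    _ = (1 - p) / p := by rw [sub_sub_cancel]; field_simp

lemma geom_lintegral {p : ℝ} (hp0 : 0 < p) (hp1 : p < 1)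
    {α : Type*} [MeasurableSpace α] (ν : Measure α)
    (X : α → ℕ) (hX : Measurable X)
    (h : ∀ k, ν {w | X w = k} = ENNReal.ofReal (p * (1 - p) ^ k)) :
    ∫⁻ w, ((X w : ℕ) : ℝ≥0∞) ∂ν = ENNReal.ofReal ((1 - p) / p) := by
  have hmap : ∀ k : ℕ, (ν.map X) {k} = ENNReal.ofReal (p * (1 - p) ^ k) := by
    intro k
    rw [Measure.map_apply hX (measurableSet_singleton k)]
    exact h k
  calc ∫⁻ w, ((X w : ℕ) : ℝ≥0∞) ∂ν
      = ∫⁻ n, ((n : ℕ) : ℝ≥0∞) ∂(ν.map X) := by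
        rw [lintegral_map (by measurability) hX]
    _ = ∑' n : ℕ, ((n : ℕ) : ℝ≥0∞) * (ν.map X) {n} := lintegral_countable' _
    _ = ∑' n : ℕ, ENNReal.ofReal ((n : ℝ) * (p * (1 - p) ^ n)) := by
        congr 1; ext n
        rw [hmap n, ← ENNReal.ofReal_natCast n,
          ← ENNReal.ofReal_mul (Nat.cast_nonneg n)]
    _ = ENNReal.ofReal (∑' n : ℕ, (n : ℝ) * (p * (1 - p) ^ n)) := by
        rw [ENNReal.ofReal_tsum_of_nonneg (fun n => mul_nonneg (Nat.cast_nonneg n) (mul_nonneg hp0.le (pow_nonneg (by linarith) n))) (geom_summable hp0 hp1)]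
    _ = ENNReal.ofReal ((1 - p) / p) := by rw [geom_tsum hp0 hp1]

lemma geom_integrable {p : ℝ} (hp0 : 0 < p) (hp1 : p < 1)
    {α : Type*} [MeasurableSpace α] (ν : Measure α)
    (X : α → ℕ) (hX : Measurable X)
    (h : ∀ k, ν {w | X w = k} = ENNReal.ofReal (p * (1 - p) ^ k)) :
    Integrable (fun w => (X w : ℝ)) ν := by
  refine ⟨(measurable_from_nat.comp hX).aestronglyMeasurable, ?_⟩
  rw [hasFiniteIntegral_iff_norm]
  have : ∀ w, ENNReal.ofReal ‖(X w : ℝ)‖ = ((X w : ℕ) : ℝ≥0∞) := by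
    intro w
    rw [Real.norm_eq_abs, abs_of_nonneg (by positivity), ENNReal.ofReal_natCast]
  simp_rw [this]
  rw [geom_lintegral hp0 hp1 ν X hX h]
  exact ENNReal.ofReal_lt_top

lemma geom_integral {p : ℝ} (hp0 : 0 < p) (hp1 : p < 1)
    {α : Type*} [MeasurableSpace α] (ν : Measure α)
    (X : α → ℕ) (hX : Measurable X)
    (h : ∀ k, ν {w | X w = k} = ENNReal.ofReal (p * (1 - p) ^ k)) :
    ∫ w, (X w : ℝ) ∂ν = (1 - p) / p := by
  have hm : AEStronglyMeasurable (fun w => (X w : ℝ)) ν :=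
    (measurable_from_nat.comp hX).aestronglyMeasurable
  rw [integral_eq_lintegral_of_nonneg_ae
    (Filter.Eventually.of_forall fun w => by positivity) hm]
  have : ∀ w, ENNReal.ofReal ((X w : ℝ)) = ((X w : ℕ) : ℝ≥0∞) := fun w =>
    ENNReal.ofReal_natCast _
  simp_rw [this]
  rw [geom_lintegral hp0 hp1 ν X hX h, ENNReal.toReal_ofReal (div_nonneg (by linarith) hp0.le)]

lemma core {p : ℝ} (hp0 : 0 < p) (hp1 : p < 1)
    (ν : Measure ((ℕ × ℤ) → ℕ)) [IsProbabilityMeasure ν]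
    (hind : iIndepFun (fun (iy : ℕ × ℤ) (x : (ℕ × ℤ) → ℕ) => x iy) ν)
    (hgeom : ∀ (iy : ℕ × ℤ) (k : ℕ), ν {x | x iy = k} = ENNReal.ofReal (p * (1 - p) ^ k))
    (a : ℕ → ℤ) (ha : ∀ k, a (k + 1) = 1 ∨ a (k + 1) = -1) :
    ∀ᵐ x ∂ν, Tendsto (fun n : ℕ => (hitP a x n : ℝ) / n) atTop (𝓝 (1 + (1 - p) / p)) := by
  set X : ℕ → ((ℕ × ℤ) → ℕ) → ℝ := fun k x => (x (sigP a k) : ℝ) with hX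
  have hmeas : ∀ k, Measurable (X k) := fun k =>
    measurable_from_nat.comp (measurable_pi_apply (sigP a k))
  have hint : Integrable (X 0) ν :=
    geom_integrable hp0 hp1 ν (fun x => x (sigP a 0)) (measurable_pi_apply _)
      (fun k => hgeom _ k)
  have hindep : Pairwise (Function.onFun (IndepFun · · ν) X) := by
    intro i j hij
    have h1 : IndepFun (fun x : (ℕ × ℤ) → ℕ => x (sigP a i))
        (fun x : (ℕ × ℤ) → ℕ => x (sigP a j)) ν :=
      hind.indepFun (fun h => hij (sigP_inj a h))
    exact h1.comp measurable_from_nat measurable_from_nat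
  have hmapeq : ∀ i : ℕ, ν.map (fun x : (ℕ × ℤ) → ℕ => x (sigP a i))
      = ν.map (fun x : (ℕ × ℤ) → ℕ => x (sigP a 0)) := by
    intro i
    apply MeasureTheory.Measure.ext_of_singleton
    intro k
    rw [Measure.map_apply (measurable_pi_apply (sigP a i)) (measurableSet_singleton k),
      Measure.map_apply (measurable_pi_apply (sigP a 0)) (measurableSet_singleton k)]
    show ν {x | x (sigP a i) = k} = ν {x | x (sigP a 0) = k}
    rw [hgeom _ k, hgeom _ k]
  have hident : ∀ i, IdentDistrib (X i) (X 0) ν ν := by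
    intro i
    refine ⟨(hmeas i).aemeasurable, (hmeas 0).aemeasurable, ?_⟩
    show ν.map ((fun n : ℕ => (n : ℝ)) ∘ fun x => x (sigP a i))
      = ν.map ((fun n : ℕ => (n : ℝ)) ∘ fun x => x (sigP a 0))
    rw [← Measure.map_map measurable_from_nat (measurable_pi_apply _),
      ← Measure.map_map measurable_from_nat (measurable_pi_apply _), hmapeq i]
  have hSL := strong_law_ae_real X hint hindep hident
  have hmean : ∫ x, X 0 x ∂ν = (1 - p) / p :=
    geom_integral hp0 hp1 ν (fun x => x (sigP a 0)) (measurable_pi_apply _)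
      (fun k => hgeom _ k)
  rw [hmean] at hSL
  filter_upwards [hSL] with x hx
  have h1 : Tendsto (fun n : ℕ => 1 + (∑ i ∈ Finset.range n, X i x) / n) atTop
      (𝓝 (1 + (1 - p) / p)) := tendsto_const_nhds.add hx
  apply h1.congr'
  filter_upwards [eventually_ge_atTop 1] with n hn
  obtain ⟨m, rfl⟩ : ∃ m, n = m + 1 := ⟨n - 1, by omega⟩
  rw [hitP_succ a ha x m]
  have hn0 : ((m : ℝ) + 1) ≠ 0 := by positivity
  push_cast
  field_simp
  rfl

/-- `P`-almost surely, `T_n / n → 1 + m` as `n → ∞`, where `m = (1-p)/p`. -/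
theorem hitTime_div_tendsto_ae
    {Ω : Type*} [MeasureSpace Ω] [IsProbabilityMeasure (ℙ : Measure Ω)]
    (p : ℝ) (hp0 : 0 < p) (hp1 : p < 1)
    (η : ℕ → Ω → ℤ) (ξ : ℕ → ℤ → Ω → ℕ)
    (hη_meas : ∀ k, Measurable (η k))
    (hη_indep : iIndepFun η ℙ)
    (hη_one : ∀ k, ℙ {ω | η k ω = 1} = 1/2)
    (hη_negone : ∀ k, ℙ {ω | η k ω = -1} = 1/2)
    (hξ_meas : ∀ i y, Measurable (ξ i y))
    (hξ_indep : iIndepFun (fun iy : ℕ × ℤ => ξ iy.1 iy.2) ℙ)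
    (hξ_geom : ∀ i y k, ℙ {ω | ξ i y ω = k} = ENNReal.ofReal (p * (1 - p) ^ k))
    (hξη_indep : IndepFun (fun ω (k : ℕ) => η k ω) (fun ω (iy : ℕ × ℤ) => ξ iy.1 iy.2 ω) ℙ) :
    ∀ᵐ ω ∂(ℙ : Measure Ω),
      Tendsto (fun n : ℕ => (hitTime η ξ n ω : ℝ) / n) atTop
        (nhds (1 + (1 - p) / p)) := by
  set F : Ω → (ℕ → ℤ) := fun ω k => η k ω with hFdef
  set G : Ω → ((ℕ × ℤ) → ℕ) := fun ω iy => ξ iy.1 iy.2 ω with hGdef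
  have hF : Measurable F := measurable_pi_lambda _ hη_meas
  have hG : Measurable G := measurable_pi_lambda _ (fun iy => hξ_meas iy.1 iy.2)
  set μA := Measure.map F ℙ with hμA
  set μB := Measure.map G ℙ with hμB
  haveI : IsProbabilityMeasure μA := Measure.isProbabilityMeasure_map hF.aemeasurable
  haveI : IsProbabilityMeasure μB := Measure.isProbabilityMeasure_map hG.aemeasurable
  have hprod : Measure.map (fun ω => (F ω, G ω)) ℙ = μA.prod μB :=
    (indepFun_iff_map_prod_eq_prod_map_map hF.aemeasurable hG.aemeasurable).mp hξη_indep
  -- the event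
  set C : Set ((ℕ → ℤ) × ((ℕ × ℤ) → ℕ)) :=
    {z | Tendsto (fun n : ℕ => (hitP z.1 z.2 n : ℝ) / n) atTop (𝓝 (1 + (1 - p) / p))} with hCdef
  have hC : MeasurableSet C :=
    measurableSet_tendsto _ (fun n =>
      (measurable_from_nat.comp (measurable_hitP n)).div_const _)
  -- coordinates of μB are iid geometric
  have hind : iIndepFun
      (fun (iy : ℕ × ℤ) (x : (ℕ × ℤ) → ℕ) => x iy) μB := by
    rw [iIndepFun_iff_measure_inter_preimage_eq_mul]
    intro S sets hsets
    have hms : MeasurableSet (⋂ i ∈ S, (fun x : (ℕ × ℤ) → ℕ => x i) ⁻¹' sets i) :=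
      MeasurableSet.iInter fun i => MeasurableSet.iInter fun hi =>
        measurable_pi_apply i (hsets i hi)
    rw [hμB, Measure.map_apply hG hms]
    have hpre : G ⁻¹' (⋂ i ∈ S, (fun x : (ℕ × ℤ) → ℕ => x i) ⁻¹' sets i)
        = ⋂ i ∈ S, (fun iy : ℕ × ℤ => ξ iy.1 iy.2) i ⁻¹' sets i := by
      ext ω; simp [Set.mem_iInter, hGdef]
    rw [hpre, hξ_indep.measure_inter_preimage_eq_mul S hsets]
    refine Finset.prod_congr rfl fun i hi => ?_
    rw [Measure.map_apply hG (measurable_pi_apply i (hsets i hi))]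
    rfl
  have hgeomB : ∀ (iy : ℕ × ℤ) (k : ℕ),
      μB {x | x iy = k} = ENNReal.ofReal (p * (1 - p) ^ k) := by
    intro iy k
    have hset : {x : (ℕ × ℤ) → ℕ | x iy = k} = (fun x : (ℕ × ℤ) → ℕ => x iy) ⁻¹' {k} := rfl
    rw [hμB, hset, Measure.map_apply hG (measurable_pi_apply iy (measurableSet_singleton k))]
    exact hξ_geom iy.1 iy.2 k
  -- a.e. path has ±1 steps
  have hgood : ∀ᵐ a ∂μA, ∀ k : ℕ, a (k + 1) = 1 ∨ a (k + 1) = -1 := by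
    have hset : MeasurableSet {a : ℕ → ℤ | ∀ k : ℕ, a (k + 1) = 1 ∨ a (k + 1) = -1} := by
      have : {a : ℕ → ℤ | ∀ k : ℕ, a (k + 1) = 1 ∨ a (k + 1) = -1}
          = ⋂ k : ℕ, ((fun a : ℕ → ℤ => a (k + 1)) ⁻¹' ({1, -1} : Set ℤ)) := by
        ext a; simp [Set.mem_iInter]
      rw [this]
      exact MeasurableSet.iInter fun k =>
        measurable_pi_apply (k + 1) (by measurability)
    rw [hμA, ae_map_iff hF.aemeasurable hset]
    rw [ae_all_iff]
    intro k
    have hm1 : MeasurableSet {ω | η (k + 1) ω = 1} :=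
      hη_meas (k + 1) (measurableSet_singleton 1)
    have hm2 : MeasurableSet {ω | η (k + 1) ω = -1} :=
      hη_meas (k + 1) (measurableSet_singleton (-1))
    have hdisj : Disjoint {ω | η (k + 1) ω = 1} {ω | η (k + 1) ω = -1} := by
      rw [Set.disjoint_left]
      intro ω h1 h2
      simp only [Set.mem_setOf_eq] at h1 h2
      omega
    have hu : ℙ ({ω | η (k + 1) ω = 1} ∪ {ω | η (k + 1) ω = -1}) = 1 := by
      rw [measure_union hdisj hm2, hη_one, hη_negone]
      exact ENNReal.add_halves 1
    have hcompl : ℙ ({ω | η (k + 1) ω = 1} ∪ {ω | η (k + 1) ω = -1})ᶜ = 0 := by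
      rw [measure_compl (hm1.union hm2) (measure_ne_top _ _), hu, measure_univ, tsub_self]
    refine ae_iff.mpr ?_
    have : {ω | ¬ (F ω (k + 1) = 1 ∨ F ω (k + 1) = -1)}
        = ({ω | η (k + 1) ω = 1} ∪ {ω | η (k + 1) ω = -1})ᶜ := by
      ext ω; simp [hFdef]
    rw [this]
    exact hcompl
  -- main: a.e. in the product
  have key : ∀ᵐ z ∂(μA.prod μB), z ∈ C := by
    refine (Measure.ae_prod_iff_ae_ae hC).mpr ?_
    filter_upwards [hgood] with a hagood
    exact core hp0 hp1 μB hind hgeomB a hagood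
  have hmain : ∀ᵐ ω ∂(ℙ : Measure Ω), (F ω, G ω) ∈ C := by
    have hpair : AEMeasurable (fun ω => (F ω, G ω)) ℙ := (hF.prodMk hG).aemeasurable
    exact (ae_map_iff hpair hC).mp (by rw [hprod]; exact key)
  filter_upwards [hmain] with ω hω
  have heq : (fun n : ℕ => (hitTime η ξ n ω : ℝ) / n)
      = fun n : ℕ => (hitP (F ω) (G ω) n : ℝ) / n := by
    funext n
    rw [hitTime_eq_hitP]
  rw [heq]
  exact hω
end
end

section
/- Let U_n = max{ k ≥ 0 : T_k ≤ n }. Then P-almost surely, for every t ≥ 0, U_{[nt]} / n converges to t / (1+m) as n → ∞. -/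
open MeasureTheory ProbabilityTheory Filter

noncomputable section

open Topology
open scoped ENNReal NNReal

/-- `U_n = max{k ≥ 0 : T_k ≤ n}` (well defined since `T_0 = 0` and `T` is increasing
with `T_k ≥ k`). -/
def lastTime {Ω : Type*} (η : ℕ → Ω → ℤ) (ξ : ℕ → ℤ → Ω → ℕ) (n : ℕ) (ω : Ω) : ℕ :=
  sSup {k : ℕ | hitTime η ξ k ω ≤ n}

namespace SLLNAux


/-- deterministic walk -/
def W (a : ℕ → ℤ) (n : ℕ) : ℤ := ∑ k ∈ Finset.range n, a (k + 1)

/-- deterministic local time -/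
def LT (a : ℕ → ℤ) (n : ℕ) (y : ℤ) : ℕ :=
  ((Finset.range (n + 1)).filter fun k => W a k = y).card

/-- the index of the geometric variable used at step `j` -/
def idx (a : ℕ → ℤ) (j : ℕ) : ℕ × ℤ := (LT a j (W a j), W a j)

lemma W_zero (a : ℕ → ℤ) : W a 0 = 0 := by simp [W]

lemma W_succ (a : ℕ → ℤ) (n : ℕ) : W a (n + 1) = W a n + a (n + 1) := by
  simp [W, Finset.sum_range_succ]

lemma LT_succ (a : ℕ → ℤ) (n : ℕ) (y : ℤ) :
    LT a (n + 1) y = LT a n y + if W a (n + 1) = y then 1 else 0 := by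
  unfold LT
  rw [Finset.range_add_one, Finset.filter_insert]
  split
  · rw [Finset.card_insert_of_notMem (by simp)]
  · simp

lemma LT_lt (a : ℕ → ℤ) {j j' : ℕ} (h : j < j') {y : ℤ} (hy : W a j' = y) :
    LT a j y < LT a j' y := by
  apply Finset.card_lt_card
  constructor
  · exact Finset.filter_subset_filter _ (by
      intro x hx
      simp only [Finset.mem_range] at *
      omega)
  · intro hsub
    have : j' ∈ (Finset.range (j + 1)).filter fun k => W a k = y :=
      hsub (by simp [hy])
    simp only [Finset.mem_filter, Finset.mem_range] at this
    omega

lemma idx_inj (a : ℕ → ℤ) : Function.Injective (idx a) := by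
  intro j j' h
  by_contra hne
  rcases Nat.lt_or_ge j j' with hlt | hge
  · have h2 : W a j = W a j' := congrArg Prod.snd h
    have := LT_lt a hlt (y := W a j) h2.symm
    have h1 : LT a j (W a j) = LT a j' (W a j') := congrArg Prod.fst h
    rw [h2] at h1 this; omega
  · have hlt : j' < j := by omega
    have h2 : W a j' = W a j := (congrArg Prod.snd h).symm
    have := LT_lt a hlt (y := W a j') h2.symm
    have h1 : LT a j' (W a j') = LT a j (W a j) := (congrArg Prod.fst h).symm
    rw [h2] at h1 this; omega

lemma abs_W_le (a : ℕ → ℤ) (h : ∀ k, a k = 1 ∨ a k = -1) (n : ℕ) : |W a n| ≤ n := by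
  induction n with
  | zero => simp [W_zero]
  | succ n ih =>
    rw [W_succ]
    calc |W a n + a (n + 1)| ≤ |W a n| + |a (n + 1)| := abs_add_le _ _
      _ ≤ n + 1 := by
        rcases h (n + 1) with h1 | h1 <;> simp [h1] <;> omega

lemma LT_eq_zero (a : ℕ → ℤ) (h : ∀ k, a k = 1 ∨ a k = -1) {n : ℕ} {y : ℤ}
    (hy : (n : ℤ) < |y|) : LT a n y = 0 := by
  unfold LT
  rw [Finset.card_eq_zero, Finset.filter_eq_empty_iff]
  intro k hk
  simp only [Finset.mem_range] at hk
  intro hW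
  have := abs_W_le a h k
  rw [hW] at this
  have : (k : ℤ) ≤ n := by exact_mod_cast Nat.lt_succ_iff.mp hk
  omega

/-- Key identity: the double sum over sites equals the sum along the path. -/
lemma key_sum (a : ℕ → ℤ) (b : ℕ × ℤ → ℕ) (h : ∀ k, a k = 1 ∨ a k = -1) (n : ℕ) :
    ∑ y ∈ Finset.Icc (-(n + 1 : ℤ)) (n + 1), ∑ i ∈ Finset.Icc 1 (LT a n y), b (i, y)
      = ∑ j ∈ Finset.range (n + 1), b (idx a j) := by
  induction n with
  | zero =>
    have h0 : ∀ y : ℤ, LT a 0 y = if (0 : ℤ) = y then 1 else 0 := by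
      intro y
      unfold LT
      rw [show Finset.range (0 + 1) = {0} from rfl, Finset.filter_singleton]
      split <;> simp_all [W_zero]
    have hIcc : Finset.Icc (-((0 : ℕ) + 1 : ℤ)) ((0 : ℕ) + 1) = {-1, 0, 1} := by decide
    push_cast at hIcc ⊢
    rw [hIcc]
    have hidx0 : idx a 0 = (1, 0) := by
      unfold idx
      rw [W_zero, h0 0]
      simp
    simp [h0, hidx0]
  | succ n ih =>
    push_cast
    -- shrink the outer range
    have hsub : Finset.Icc (-(n + 1 : ℤ)) (n + 1) ⊆ Finset.Icc (-(n + 1 + 1 : ℤ)) (n + 1 + 1) := by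
      apply Finset.Icc_subset_Icc <;> omega
    have hzero : ∀ y ∈ Finset.Icc (-(n + 1 + 1 : ℤ)) (n + 1 + 1),
        y ∉ Finset.Icc (-(n + 1 : ℤ)) (n + 1) →
        ∑ i ∈ Finset.Icc 1 (LT a (n + 1) y), b (i, y) = 0 := by
      intro y hy hy'
      simp only [Finset.mem_Icc] at hy hy'
      have : LT a (n + 1) y = 0 := LT_eq_zero a h (by push_cast; rw [lt_abs]; omega)
      simp [this]
    rw [← Finset.sum_subset hsub hzero]
    have hsplit : ∀ y ∈ Finset.Icc (-(n + 1 : ℤ)) (n + 1),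
        ∑ i ∈ Finset.Icc 1 (LT a (n + 1) y), b (i, y)
          = (∑ i ∈ Finset.Icc 1 (LT a n y), b (i, y))
            + if W a (n + 1) = y then b (LT a n y + 1, y) else 0 := by
      intro y _
      rw [LT_succ]
      split
      · rw [Finset.sum_Icc_succ_top (by omega : 1 ≤ LT a n y + 1)]
      · simp
    rw [Finset.sum_congr rfl hsplit, Finset.sum_add_distrib, ih]
    have hmem : W a (n + 1) ∈ Finset.Icc (-(n + 1 : ℤ)) (n + 1) := by
      have habs := abs_le.mp (abs_W_le a h (n + 1))
      simp only [Finset.mem_Icc]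
      push_cast at habs ⊢
      omega
    rw [Finset.sum_ite_eq (Finset.Icc (-(n + 1 : ℤ)) (n + 1)) (W a (n + 1))
      (fun y => b (LT a n y + 1, y))]
    simp only [hmem, if_true]
    have hidx : idx a (n + 1) = (LT a n (W a (n + 1)) + 1, W a (n + 1)) := by
      unfold idx
      rw [LT_succ]
      simp
    rw [Finset.sum_range_succ (fun j => b (idx a j)) (n + 1), hidx]



lemma measurable_W (n : ℕ) : Measurable fun a : ℕ → ℤ => W a n :=
  Finset.measurable_sum _ fun k _ => measurable_pi_apply _

lemma measurable_idx (j : ℕ) : Measurable fun a : ℕ → ℤ => idx a j := by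
  apply Measurable.prodMk
  · have : (fun a : ℕ → ℤ => LT a j (W a j))
        = fun a => ∑ k ∈ Finset.range (j + 1), if W a k = W a j then 1 else 0 := by
      funext a
      rw [LT, Finset.card_filter]
    rw [this]
    apply Finset.measurable_sum
    intro k _
    apply Measurable.ite _ measurable_const measurable_const
    exact measurableSet_eq_fun (measurable_W k) (measurable_W j)
  · exact measurable_W j

lemma measurable_eval2 : Measurable fun q : ((ℕ × ℤ) → ℕ) × (ℕ × ℤ) => q.1 q.2 := by
  apply measurable_to_countable'
  intro k
  have : (fun q : ((ℕ × ℤ) → ℕ) × (ℕ × ℤ) => q.1 q.2) ⁻¹' {k}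
      = ⋃ p : ℕ × ℤ, ((fun f : (ℕ × ℤ) → ℕ => f p) ⁻¹' {k}) ×ˢ ({p} : Set (ℕ × ℤ)) := by
    ext ⟨f, q⟩
    simp only [Set.mem_preimage, Set.mem_singleton_iff, Set.mem_iUnion, Set.mem_prod]
    constructor
    · intro hf; exact ⟨q, hf, rfl⟩
    · rintro ⟨q', hf, rfl⟩; exact hf
  rw [this]
  exact MeasurableSet.iUnion fun q =>
    (((measurable_pi_apply q) (measurableSet_singleton k)).prod (measurableSet_singleton q))

lemma geom_moment {p : ℝ} (hp0 : 0 < p) (hp1 : p < 1) {Ω' : Type*} [MeasurableSpace Ω']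
    (ν : Measure Ω') [IsProbabilityMeasure ν] (X : Ω' → ℕ) (hX : Measurable X)
    (hlaw : ∀ k, ν {ω | X ω = k} = ENNReal.ofReal (p * (1 - p) ^ k)) :
    Integrable (fun ω => (X ω : ℝ)) ν ∧ ∫ ω, (X ω : ℝ) ∂ν = (1 - p) / p := by
  set r : ℝ := 1 - p with hr_def
  have hr0 : 0 < r := by simp [hr_def]; linarith
  have hr1 : ‖r‖ < 1 := by
    rw [Real.norm_eq_abs, abs_of_pos hr0]; simp [hr_def]; linarith
  have hsum : Summable fun k : ℕ => (k : ℝ) * r ^ k := by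
    simpa using summable_pow_mul_geometric_of_norm_lt_one 1 hr1
  have hsum' : Summable fun k : ℕ => (k : ℝ) * (p * r ^ k) := by
    simpa [mul_left_comm] using hsum.mul_left p
  have htsum : ∑' k : ℕ, (k : ℝ) * (p * r ^ k) = r / p := by
    have h1 : ∑' k : ℕ, (k : ℝ) * (p * r ^ k) = p * ∑' k : ℕ, (k : ℝ) * r ^ k := by
      rw [← tsum_mul_left]
      congr 1; funext k; ring
    rw [h1, tsum_coe_mul_geometric_of_norm_lt_one hr1]
    have : (1 : ℝ) - r = p := by simp [hr_def]
    rw [this]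
    field_simp
  have hmX : Measurable fun ω => (X ω : ℝ) := (measurable_of_countable _).comp hX
  have hlint : ∫⁻ ω, (X ω : ℝ≥0∞) ∂ν = ENNReal.ofReal (r / p) := by
    have h1 : ∫⁻ ω, (X ω : ℝ≥0∞) ∂ν = ∫⁻ k, (k : ℝ≥0∞) ∂(ν.map X) :=
      (lintegral_map (measurable_of_countable _) hX).symm
    rw [h1, lintegral_countable']
    have h2 : ∀ k : ℕ, (ν.map X) {k} = ENNReal.ofReal (p * r ^ k) := by
      intro k
      rw [Measure.map_apply hX (measurableSet_singleton k)]
      exact hlaw k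
    calc ∑' k : ℕ, (k : ℝ≥0∞) * (ν.map X) {k}
        = ∑' k : ℕ, ENNReal.ofReal ((k : ℝ) * (p * r ^ k)) := by
          congr 1; funext k
          rw [h2 k, ← ENNReal.ofReal_natCast k, ← ENNReal.ofReal_mul (by positivity)]
      _ = ENNReal.ofReal (∑' k : ℕ, (k : ℝ) * (p * r ^ k)) :=
          (ENNReal.ofReal_tsum_of_nonneg (fun k => by positivity) hsum').symm
      _ = ENNReal.ofReal (r / p) := by rw [htsum]
  have hint : Integrable (fun ω => (X ω : ℝ)) ν := by
    refine ⟨hmX.aestronglyMeasurable, ?_⟩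
    rw [hasFiniteIntegral_def]
    have : ∀ ω, ‖(X ω : ℝ)‖ₑ = (X ω : ℝ≥0∞) := by
      intro ω
      simp
    simp_rw [this, hlint]
    exact ENNReal.ofReal_lt_top
  refine ⟨hint, ?_⟩
  rw [integral_eq_lintegral_of_nonneg_ae (Filter.Eventually.of_forall fun ω => by positivity)
    hmX.aestronglyMeasurable]
  have h4 : ∀ ω, ENNReal.ofReal ((X ω : ℝ)) = (X ω : ℝ≥0∞) := fun ω => ENNReal.ofReal_natCast _
  have h3 : ∫⁻ ω, ENNReal.ofReal ((X ω : ℝ)) ∂ν = ENNReal.ofReal (r / p) := by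
    simp_rw [h4]; exact hlint
  rw [h3, ENNReal.toReal_ofReal (by positivity)]

lemma section_tendsto {p : ℝ} (hp0 : 0 < p) (hp1 : p < 1)
    {ν : Measure ((ℕ × ℤ) → ℕ)} [IsProbabilityMeasure ν]
    (hlaw : ∀ (q : ℕ × ℤ) (k : ℕ), ν {b | b q = k} = ENNReal.ofReal (p * (1 - p) ^ k))
    (hind : ∀ q q' : ℕ × ℤ, q ≠ q' →
      IndepFun (fun b : (ℕ × ℤ) → ℕ => b q) (fun b => b q') ν)
    (σ : ℕ → ℕ × ℤ) (hσ : Function.Injective σ) :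
    ∀ᵐ b ∂ν, Tendsto (fun n => (∑ j ∈ Finset.range n, (b (σ j) : ℝ)) / n) atTop
      (𝓝 ((1 - p) / p)) := by
  set X : ℕ → ((ℕ × ℤ) → ℕ) → ℝ := fun j b => (b (σ j) : ℝ) with hX_def
  have hmom : ∀ j, Integrable (X j) ν ∧ ∫ b, X j b ∂ν = (1 - p) / p := fun j =>
    geom_moment hp0 hp1 ν (fun b => b (σ j)) (measurable_pi_apply _) (hlaw (σ j))
  have hindep : Pairwise (Function.onFun (IndepFun · · ν) X) := by
    intro i j hij
    have h1 : IndepFun (fun b : (ℕ × ℤ) → ℕ => b (σ i)) (fun b => b (σ j)) ν :=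
      hind _ _ fun h => hij (hσ h)
    exact h1.comp (measurable_of_countable _) (measurable_of_countable _)
  have hident : ∀ i, IdentDistrib (X i) (X 0) ν ν := by
    intro i
    have h1 : IdentDistrib (fun b : (ℕ × ℤ) → ℕ => b (σ i)) (fun b => b (σ 0)) ν ν := by
      refine ⟨(measurable_pi_apply _).aemeasurable, (measurable_pi_apply _).aemeasurable, ?_⟩
      apply MeasureTheory.Measure.ext_of_singleton
      intro k
      rw [Measure.map_apply (measurable_pi_apply (σ i)) (measurableSet_singleton k),
        Measure.map_apply (measurable_pi_apply (σ 0)) (measurableSet_singleton k)]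
      show ν {b | b (σ i) = k} = ν {b | b (σ 0) = k}
      rw [hlaw, hlaw]
    exact h1.comp (measurable_of_countable _)
  have := strong_law_ae X (hmom 0).1 hindep hident
  rw [(hmom 0).2] at this
  filter_upwards [this] with b hb
  convert hb using 2 with n
  simp [div_eq_inv_mul, hX_def]



lemma U_tendsto (T : ℕ → ℕ) (hT0 : T 0 = 0) (hmono : ∀ n, T n + 1 ≤ T (n + 1)) {c : ℝ}
    (hc : 0 < c) (hlim : Tendsto (fun n : ℕ => (T n : ℝ) / n) atTop (𝓝 c)) :
    Tendsto (fun n : ℕ => ((sSup {k | T k ≤ n} : ℕ) : ℝ) / n) atTop (𝓝 c⁻¹) := by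
  have hTk : ∀ k, k ≤ T k := by
    intro k
    induction k with
    | zero => omega
    | succ k ih => have := hmono k; omega
  set U : ℕ → ℕ := fun n => sSup {k | T k ≤ n} with hU_def
  have hbdd : ∀ n, BddAbove {k | T k ≤ n} := fun n =>
    ⟨n, fun k hk => le_trans (hTk k) hk⟩
  have hTU : ∀ n, T (U n) ≤ n := fun n => Nat.sSup_mem ⟨0, by simp [hT0]⟩ (hbdd n)
  have hTU1 : ∀ n, n < T (U n + 1) := by
    intro n
    by_contra hcon
    push_neg at hcon
    have : U n + 1 ≤ U n := le_csSup (hbdd n) hcon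
    omega
  have hUtop : Tendsto U atTop atTop := by
    apply tendsto_atTop.2
    intro K
    filter_upwards [eventually_ge_atTop (T K)] with n hn
    exact le_csSup (hbdd n) hn
  have hU1top : Tendsto (fun n => U n + 1) atTop atTop :=
    tendsto_atTop_mono (fun n => Nat.le_succ (U n)) hUtop
  have h1 : Tendsto (fun n => (T (U n) : ℝ) / (U n)) atTop (𝓝 c) := hlim.comp hUtop
  have h2 : Tendsto (fun n => (T (U n + 1) : ℝ) / ((U n + 1 : ℕ) : ℝ)) atTop (𝓝 c) :=
    hlim.comp hU1top
  have hUinv : Tendsto (fun n => ((U n : ℝ))⁻¹) atTop (𝓝 0) :=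
    tendsto_inv_atTop_zero.comp (tendsto_natCast_atTop_atTop.comp hUtop)
  have h3 : Tendsto (fun n => ((U n + 1 : ℕ) : ℝ) / (U n)) atTop (𝓝 1) := by
    have h4 : Tendsto (fun n => 1 + ((U n : ℝ))⁻¹) atTop (𝓝 (1 + 0)) :=
      tendsto_const_nhds.add hUinv
    rw [add_zero] at h4
    apply h4.congr'
    filter_upwards [hUtop.eventually_ge_atTop 1] with n hn
    have hne : (U n : ℝ) ≠ 0 := by
      have h5 : (0 : ℝ) < (U n : ℝ) := by exact_mod_cast hn
      exact ne_of_gt h5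
    push_cast
    field_simp
  have hub : Tendsto (fun n => (T (U n + 1) : ℝ) / ((U n + 1 : ℕ) : ℝ) * (((U n + 1 : ℕ) : ℝ) / (U n)))
      atTop (𝓝 (c * 1)) := h2.mul h3
  rw [mul_one] at hub
  have hnU : Tendsto (fun n : ℕ => (n : ℝ) / (U n)) atTop (𝓝 c) := by
    apply tendsto_of_tendsto_of_tendsto_of_le_of_le' h1 hub
    · filter_upwards [] with n
      gcongr
      exact_mod_cast hTU n
    · filter_upwards [hUtop.eventually_ge_atTop 1] with n hn
      have hpos : (0 : ℝ) < (U n : ℝ) := by exact_mod_cast hn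
      have hle : (n : ℝ) ≤ (T (U n + 1) : ℝ) := by exact_mod_cast (hTU1 n).le
      calc (n : ℝ) / (U n) ≤ (T (U n + 1) : ℝ) / (U n) := by gcongr
        _ = _ := by push_cast; field_simp
  have := hnU.inv₀ (ne_of_gt hc)
  exact this.congr fun n => by rw [inv_div]


lemma hit_eq {Ω : Type*} (η : ℕ → Ω → ℤ) (ξ : ℕ → ℤ → Ω → ℕ) (ω : Ω)
    (h : ∀ k, η k ω = 1 ∨ η k ω = -1) :
    ∀ n, hitTime η ξ n ω
      = n + ∑ j ∈ Finset.range n, (fun q : ℕ × ℤ => ξ q.1 q.2 ω) (idx (fun k => η k ω) j)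
  | 0 => by simp [hitTime]
  | (n + 1) => by
    have h1 : hitTime η ξ (n + 1) ω = (n + 1) + ∑ y ∈ Finset.Icc (-(n + 1 : ℤ)) (n + 1),
        ∑ i ∈ Finset.Icc 1 (LT (fun k => η k ω) n y), (fun q : ℕ × ℤ => ξ q.1 q.2 ω) (i, y) :=
      rfl
    rw [h1, key_sum (fun k => η k ω) (fun q : ℕ × ℤ => ξ q.1 q.2 ω) h n]

end SLLNAux

open SLLNAux

/-- `P`-almost surely, for every `t ≥ 0`, `U_{[nt]} / n → t / (1 + m)` as `n → ∞`,
where `m = (1-p)/p`. -/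
theorem lastTime_div_tendsto_ae
    {Ω : Type*} [MeasureSpace Ω] [IsProbabilityMeasure (ℙ : Measure Ω)]
    (p : ℝ) (hp0 : 0 < p) (hp1 : p < 1)
    (η : ℕ → Ω → ℤ) (ξ : ℕ → ℤ → Ω → ℕ)
    (hη_meas : ∀ k, Measurable (η k))
    (hη_indep : iIndepFun η ℙ)
    (hη_one : ∀ k, ℙ {ω | η k ω = 1} = 1/2)
    (hη_negone : ∀ k, ℙ {ω | η k ω = -1} = 1/2)
    (hξ_meas : ∀ i y, Measurable (ξ i y))
    (hξ_indep : iIndepFun (fun iy : ℕ × ℤ => ξ iy.1 iy.2) ℙ)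
    (hξ_geom : ∀ i y k, ℙ {ω | ξ i y ω = k} = ENNReal.ofReal (p * (1 - p) ^ k))
    (hξη_indep : IndepFun (fun ω (k : ℕ) => η k ω) (fun ω (iy : ℕ × ℤ) => ξ iy.1 iy.2 ω) ℙ) :
    ∀ᵐ ω ∂(ℙ : Measure Ω), ∀ t : ℝ, 0 ≤ t →
      Tendsto (fun n : ℕ => (lastTime η ξ ⌊(n : ℝ) * t⌋₊ ω : ℝ) / n) atTop
        (nhds (t / (1 + (1 - p) / p))) := by
  classical
  set m : ℝ := (1 - p) / p with hm_def
  have hm0 : 0 ≤ m := div_nonneg (by linarith) hp0.le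
  set a : Ω → ℕ → ℤ := fun ω k => η k ω with ha_def
  set bb : Ω → (ℕ × ℤ) → ℕ := fun ω q => ξ q.1 q.2 ω with hb_def
  have ha_meas : Measurable a := measurable_pi_lambda _ hη_meas
  have hb_meas : Measurable bb := measurable_pi_lambda _ fun q => hξ_meas q.1 q.2
  set μ : Measure (ℕ → ℤ) := Measure.map a ℙ with hμ_def
  set ν : Measure ((ℕ × ℤ) → ℕ) := Measure.map bb ℙ with hν_def
  have hμP : IsProbabilityMeasure μ := Measure.isProbabilityMeasure_map ha_meas.aemeasurable
  have hνP : IsProbabilityMeasure ν := Measure.isProbabilityMeasure_map hb_meas.aemeasurable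
  have hlaw : ∀ (q : ℕ × ℤ) (k : ℕ), ν {b | b q = k} = ENNReal.ofReal (p * (1 - p) ^ k) := by
    intro q k
    rw [hν_def, show {b : (ℕ × ℤ) → ℕ | b q = k} = (fun b : (ℕ × ℤ) → ℕ => b q) ⁻¹' {k} from rfl,
      Measure.map_apply hb_meas ((measurable_pi_apply q) (measurableSet_singleton k))]
    exact hξ_geom q.1 q.2 k
  have hind : ∀ q q' : ℕ × ℤ, q ≠ q' →
      IndepFun (fun b : (ℕ × ℤ) → ℕ => b q) (fun b => b q') ν := by
    intro q q' hqq'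
    rw [indepFun_iff_measure_inter_preimage_eq_mul]
    intro s t hs ht
    have h0 := hξ_indep.indepFun hqq'
    rw [indepFun_iff_measure_inter_preimage_eq_mul] at h0
    have h1 := h0 s t hs ht
    have hms : MeasurableSet ((fun b : (ℕ × ℤ) → ℕ => b q) ⁻¹' s) := measurable_pi_apply q hs
    have hmt : MeasurableSet ((fun b : (ℕ × ℤ) → ℕ => b q') ⁻¹' t) := measurable_pi_apply q' ht
    rw [hν_def, Measure.map_apply hb_meas (hms.inter hmt), Measure.map_apply hb_meas hms,
      Measure.map_apply hb_meas hmt]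
    exact h1
  set E : Set ((ℕ → ℤ) × ((ℕ × ℤ) → ℕ)) :=
    {x | Tendsto (fun n : ℕ => (∑ j ∈ Finset.range n, (x.2 (idx x.1 j) : ℝ)) / n) atTop (𝓝 m)}
    with hE_def
  have hF : ∀ n : ℕ, Measurable fun x : (ℕ → ℤ) × ((ℕ × ℤ) → ℕ) =>
      (∑ j ∈ Finset.range n, (x.2 (idx x.1 j) : ℝ)) / n := by
    intro n
    apply Measurable.div_const
    apply Finset.measurable_sum
    intro j _
    have heq : (fun x : (ℕ → ℤ) × ((ℕ × ℤ) → ℕ) => (x.2 (idx x.1 j) : ℝ))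
        = (fun k : ℕ => (k : ℝ)) ∘ ((fun q : ((ℕ × ℤ) → ℕ) × (ℕ × ℤ) => q.1 q.2) ∘
            fun x : (ℕ → ℤ) × ((ℕ × ℤ) → ℕ) => (x.2, idx x.1 j)) := rfl
    rw [heq]
    exact (measurable_of_countable _).comp (measurable_eval2.comp
      (measurable_snd.prodMk ((measurable_idx j).comp measurable_fst)))
  have hE : MeasurableSet E := measurableSet_tendsto_fun hF measurable_const
  have hsec : ∀ aa : ℕ → ℤ, ν (Prod.mk aa ⁻¹' E) = 1 := by
    intro aa
    have hae : ∀ᵐ b ∂ν, (aa, b) ∈ E :=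
      section_tendsto hp0 hp1 hlaw hind (idx aa) (idx_inj aa)
    have hmsec : MeasurableSet (Prod.mk aa ⁻¹' E) := hE.preimage measurable_prodMk_left
    have hnull : ν {b | ¬ (aa, b) ∈ E} = 0 := ae_iff.mp hae
    rw [← compl_compl (Prod.mk aa ⁻¹' E), measure_compl hmsec.compl (measure_ne_top _ _)]
    have hcompl : (Prod.mk aa ⁻¹' E)ᶜ = {b | ¬ (aa, b) ∈ E} := rfl
    rw [hcompl, hnull, measure_univ, tsub_zero]
  have hprodE : (μ.prod ν) E = 1 := by
    rw [Measure.prod_apply hE]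
    simp_rw [hsec]
    simp
  have hjoint : Measure.map (fun ω => (a ω, bb ω)) ℙ = μ.prod ν :=
    (indepFun_iff_map_prod_eq_prod_map_map ha_meas.aemeasurable hb_meas.aemeasurable).mp hξη_indep
  have hPE : ℙ ((fun ω => (a ω, bb ω)) ⁻¹' E) = 1 := by
    rw [← Measure.map_apply (ha_meas.prodMk hb_meas) hE, hjoint, hprodE]
  have hae1 : ∀ᵐ ω ∂(ℙ : Measure Ω), (a ω, bb ω) ∈ E := by
    have hms : MeasurableSet ((fun ω => (a ω, bb ω)) ⁻¹' E) := (ha_meas.prodMk hb_meas) hE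
    rw [ae_iff]
    have hss : {ω | ¬ (a ω, bb ω) ∈ E} = ((fun ω => (a ω, bb ω)) ⁻¹' E)ᶜ := rfl
    rw [hss, measure_compl hms (measure_ne_top _ _), hPE, measure_univ, tsub_self]
  have hsign : ∀ᵐ ω ∂(ℙ : Measure Ω), ∀ k, η k ω = 1 ∨ η k ω = -1 := by
    rw [ae_all_iff]
    intro k
    have hm1 : MeasurableSet {ω | η k ω = 1} := hη_meas k (measurableSet_singleton 1)
    have hm2 : MeasurableSet {ω | η k ω = -1} := hη_meas k (measurableSet_singleton (-1))
    have hdisj : Disjoint {ω | η k ω = 1} {ω | η k ω = -1} := by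
      rw [Set.disjoint_left]
      intro ω h1 h2
      simp only [Set.mem_setOf_eq] at h1 h2
      rw [h1] at h2
      exact absurd h2 (by decide)
    have hun : ℙ ({ω | η k ω = 1} ∪ {ω | η k ω = -1}) = 1 := by
      rw [measure_union hdisj hm2, hη_one, hη_negone, ENNReal.add_halves]
    rw [ae_iff]
    have hss : {ω | ¬ (η k ω = 1 ∨ η k ω = -1)} = ({ω | η k ω = 1} ∪ {ω | η k ω = -1})ᶜ := by
      ext ω; simp [Set.mem_union, not_or]
    rw [hss, measure_compl (hm1.union hm2) (measure_ne_top _ _), hun, measure_univ, tsub_self]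
  filter_upwards [hae1, hsign] with ω hωE hωs
  have hωE' : Tendsto (fun n : ℕ =>
      (∑ j ∈ Finset.range n, ((bb ω) (idx (a ω) j) : ℝ)) / n) atTop (𝓝 m) := hωE
  have hhit : Tendsto (fun n : ℕ => (hitTime η ξ n ω : ℝ) / n) atTop (𝓝 (1 + m)) := by
    have hlim2 : Tendsto (fun n : ℕ =>
        1 + (∑ j ∈ Finset.range n, ((bb ω) (idx (a ω) j) : ℝ)) / n) atTop (𝓝 (1 + m)) :=
      tendsto_const_nhds.add hωE'
    apply hlim2.congr'
    filter_upwards [eventually_ge_atTop 1] with n hn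
    have hne : (n : ℝ) ≠ 0 := by positivity
    rw [hit_eq η ξ ω hωs n]
    push_cast
    rw [add_div, div_self hne]
  set T : ℕ → ℕ := fun k => hitTime η ξ k ω with hT_def
  have hT0 : T 0 = 0 := rfl
  have hmono : ∀ n, T n + 1 ≤ T (n + 1) := by
    intro n
    have e1 := hit_eq η ξ ω hωs n
    have e2 := hit_eq η ξ ω hωs (n + 1)
    rw [hT_def]
    simp only [e1, e2, Finset.sum_range_succ]
    omega
  have hTk : ∀ k, k ≤ T k := by
    intro k
    induction k with
    | zero => omega
    | succ k ih => have := hmono k; omega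
  have hc : (0 : ℝ) < 1 + m := by linarith
  have hU := U_tendsto T hT0 hmono hc hhit
  intro t ht
  rcases eq_or_lt_of_le ht with h0 | hpos
  · have hfl : ∀ n : ℕ, ⌊(n : ℝ) * t⌋₊ = 0 := by
      intro n
      rw [← h0, mul_zero, Nat.floor_zero]
    have hU0 : lastTime η ξ 0 ω = 0 := by
      have hset : {k : ℕ | T k ≤ 0} = {0} := by
        ext k
        simp only [Set.mem_setOf_eq, Set.mem_singleton_iff]
        constructor
        · intro hk
          have := hTk k
          omega
        · intro hk
          subst hk
          exact le_of_eq hT0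
      show sSup {k : ℕ | T k ≤ 0} = 0
      rw [hset, csSup_singleton]
    have hzero : (fun n : ℕ => (lastTime η ξ ⌊(n : ℝ) * t⌋₊ ω : ℝ) / n) = fun n : ℕ => 0 := by
      funext n
      rw [hfl n, hU0]
      simp
    rw [hzero, ← h0]
    simp only [zero_div]
    exact tendsto_const_nhds
  · have hfloor_top : Tendsto (fun n : ℕ => ⌊(n : ℝ) * t⌋₊) atTop atTop :=
      tendsto_nat_floor_atTop.comp (Tendsto.atTop_mul_const hpos tendsto_natCast_atTop_atTop)
    have h1 : Tendsto (fun n : ℕ =>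
        ((lastTime η ξ ⌊(n : ℝ) * t⌋₊ ω : ℕ) : ℝ) / ((⌊(n : ℝ) * t⌋₊ : ℕ) : ℝ)) atTop
        (𝓝 (1 + m)⁻¹) := hU.comp hfloor_top
    have h2 : Tendsto (fun n : ℕ => ((⌊(n : ℝ) * t⌋₊ : ℕ) : ℝ) / n) atTop (𝓝 t) := by
      have h3 : Tendsto (fun n : ℕ => ((⌊t * (n : ℝ)⌋₊ : ℕ) : ℝ) / (n : ℝ)) atTop (𝓝 t) :=
        (tendsto_nat_floor_mul_div_atTop ht).comp tendsto_natCast_atTop_atTop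
      apply h3.congr
      intro n
      rw [mul_comm]
    have h4 := h1.mul h2
    rw [inv_mul_eq_div] at h4
    apply h4.congr'
    filter_upwards [hfloor_top.eventually_ge_atTop 1, eventually_ge_atTop 1] with n hn hn1
    have hne : ((⌊(n : ℝ) * t⌋₊ : ℕ) : ℝ) ≠ 0 := Nat.cast_ne_zero.mpr (by omega)
    have hne2 : (n : ℝ) ≠ 0 := by positivity
    field_simp
end
end

section
/- There exists a constant K > 0 such that for all n ≥ 1, E[ Σ_{y∈ℤ} N_n(y)² ] ≤ K n^{3/2}. -/
open MeasureTheory ProbabilityTheory Filter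
open scoped ENNReal

noncomputable section

/-- Probability that a sum of `m` independent fair `±1` steps equals `y`. -/
def binProb (m : ℕ) (y : ℤ) : ℝ :=
  if (y + m) % 2 = 0 ∧ 0 ≤ y + m then (m.choose ((y + m) / 2).toNat : ℝ) / 2 ^ m else 0

lemma binProb_nonneg (m : ℕ) (y : ℤ) : 0 ≤ binProb m y := by
  unfold binProb; split_ifs <;> positivity

lemma binProb_zero (y : ℤ) : binProb 0 y = if y = 0 then 1 else 0 := by
  unfold binProb
  simp only [Nat.cast_zero, add_zero, pow_zero, div_one]
  by_cases hy : y = 0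
  · subst hy; norm_num
  · rw [if_neg hy]
    by_cases hp : y % 2 = 0 ∧ 0 ≤ y
    · rw [if_pos hp, Nat.choose_eq_zero_of_lt (by omega)]
      simp
    · rw [if_neg hp]

lemma binProb_succ (m : ℕ) (y : ℤ) :
    binProb (m + 1) y = (binProb m (y - 1) + binProb m (y + 1)) / 2 := by
  unfold binProb
  by_cases h : (y + ((m:ℤ) + 1)) % 2 = 0 ∧ 0 ≤ y + ((m:ℤ) + 1)
  · have hcast : (((m+1:ℕ)):ℤ) = (m:ℤ) + 1 := by push_cast; ring
    rw [if_pos (by rw [hcast]; exact h)]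
    obtain ⟨s, hs⟩ : ∃ s : ℕ, y + (m:ℤ) + 1 = 2 * s := ⟨(y + m + 1).toNat / 2, by omega⟩
    have e0 : ((y + ((m+1:ℕ):ℤ)) / 2).toNat = s := by omega
    rw [e0]
    by_cases h1 : 1 ≤ s
    · obtain ⟨t, rfl⟩ : ∃ t, s = t + 1 := ⟨s - 1, by omega⟩
      rw [if_pos (⟨by omega, by omega⟩ : (y - 1 + (m:ℤ)) % 2 = 0 ∧ 0 ≤ y - 1 + (m:ℤ))]
      rw [if_pos (⟨by omega, by omega⟩ : (y + 1 + (m:ℤ)) % 2 = 0 ∧ 0 ≤ y + 1 + (m:ℤ))]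
      have e1 : ((y - 1 + (m:ℤ)) / 2).toNat = t := by omega
      have e2 : ((y + 1 + (m:ℤ)) / 2).toNat = t + 1 := by omega
      rw [e1, e2]
      push_cast [Nat.choose_succ_succ]
      ring
    · have hs0 : s = 0 := by omega
      subst hs0
      rw [if_neg (by omega), if_pos (⟨by omega, by omega⟩ : (y + 1 + (m:ℤ)) % 2 = 0 ∧ 0 ≤ y + 1 + (m:ℤ))]
      have e2 : ((y + 1 + (m:ℤ)) / 2).toNat = 0 := by omega
      rw [e2]
      simp only [Nat.choose_zero_right, Nat.cast_one]
      ring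
  · have hcast : (((m+1:ℕ)):ℤ) = (m:ℤ) + 1 := by push_cast; ring
    rw [if_neg (by rw [hcast]; exact h), if_neg (by omega), if_neg (by omega)]
    norm_num

lemma centralBinom_le_real (t : ℕ) :
    (Nat.centralBinom t : ℝ) ≤ 4 ^ t / Real.sqrt (t + 1) := by
  induction t with
  | zero => simp [Nat.centralBinom_zero]
  | succ t ih =>
    have hx : Real.sqrt (t + 1) > 0 := Real.sqrt_pos.2 (by positivity)
    have hy : Real.sqrt (t + 2) > 0 := Real.sqrt_pos.2 (by positivity)
    have hrec : ((t : ℝ) + 1) * (Nat.centralBinom (t + 1) : ℝ)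
        = 2 * (2 * t + 1) * (Nat.centralBinom t : ℝ) := by
      exact_mod_cast congrArg (Nat.cast (R := ℝ)) (Nat.succ_mul_centralBinom_succ t)
    have key : 2 * (2 * (t:ℝ) + 1) * Real.sqrt (t + 2) ≤ 4 * ((t:ℝ) + 1) * Real.sqrt (t + 1) := by
      have h := Real.sqrt_le_sqrt (show (2 * (2 * (t:ℝ) + 1))^2 * (t + 2)
          ≤ (4 * ((t:ℝ) + 1))^2 * (t + 1) by nlinarith [sq_nonneg ((t:ℝ))])
      rwa [Real.sqrt_mul (by positivity) ((t:ℝ)+2), Real.sqrt_mul (by positivity) ((t:ℝ)+1),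
        Real.sqrt_sq (by positivity), Real.sqrt_sq (by positivity)] at h
    have ih' : (Nat.centralBinom t : ℝ) * Real.sqrt (t + 1) ≤ 4 ^ t := by
      rw [← le_div_iff₀ hx]; exact ih
    have hcast : ((t + 1 : ℕ) : ℝ) + 1 = (t : ℝ) + 2 := by push_cast; ring
    rw [hcast, le_div_iff₀ hy]
    have hcb : (0:ℝ) ≤ (Nat.centralBinom t : ℝ) := by positivity
    have h1 : ((t:ℝ) + 1) * ((Nat.centralBinom (t + 1) : ℝ) * Real.sqrt ((t:ℝ) + 2))
        = 2 * (2 * t + 1) * (Nat.centralBinom t : ℝ) * Real.sqrt (t + 2) := by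
      rw [← mul_assoc, hrec]
    have h2 : ((t:ℝ) + 1) * ((Nat.centralBinom (t + 1) : ℝ) * Real.sqrt ((t:ℝ) + 2))
        ≤ ((t:ℝ) + 1) * 4 ^ (t + 1) := by
      rw [h1, pow_succ]
      nlinarith [mul_le_mul_of_nonneg_left key hcb,
        mul_le_mul_of_nonneg_left ih' (by positivity : (0:ℝ) ≤ 4 * ((t:ℝ) + 1))]
    exact le_of_mul_le_mul_left h2 (by positivity)

lemma binProb_zero_le (m : ℕ) : binProb m 0 ≤ Real.sqrt 2 / Real.sqrt (m + 1) := by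
  unfold binProb
  split_ifs with h
  · obtain ⟨t, rfl⟩ : ∃ t, m = 2 * t := by
      rcases h with ⟨h1, -⟩
      exact ⟨m / 2, by omega⟩
    have e1 : (((0:ℤ) + (2 * t : ℕ)) / 2).toNat = t := by push_cast; omega
    rw [e1]
    have e2 : (2 * t).choose t = Nat.centralBinom t := rfl
    rw [e2]
    have h4 : (2:ℝ) ^ (2 * t) = 4 ^ t := by rw [pow_mul]; norm_num
    rw [h4]
    have hcb := centralBinom_le_real t
    have hy : (0:ℝ) < Real.sqrt (t + 1) := Real.sqrt_pos.2 (by positivity)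
    have hz : (0:ℝ) < Real.sqrt ((2 * t : ℕ) + 1) := Real.sqrt_pos.2 (by positivity)
    have h4p : (0:ℝ) < 4 ^ t := by positivity
    have step1 : (Nat.centralBinom t : ℝ) / 4 ^ t ≤ 1 / Real.sqrt (t + 1) := by
      rw [div_le_div_iff₀ h4p hy]
      calc (Nat.centralBinom t : ℝ) * Real.sqrt (t+1)
          ≤ (4 ^ t / Real.sqrt (t+1)) * Real.sqrt (t+1) :=
            mul_le_mul_of_nonneg_right hcb hy.le
        _ = 4 ^ t := by field_simp
        _ = 1 * 4 ^ t := (one_mul _).symm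
    have step2 : (1:ℝ) / Real.sqrt (t + 1) ≤ Real.sqrt 2 / Real.sqrt ((2 * t : ℕ) + 1) := by
      rw [div_le_div_iff₀ hy hz]
      have : Real.sqrt ((2 * t : ℕ) + 1) ≤ Real.sqrt 2 * Real.sqrt (t + 1) := by
        rw [← Real.sqrt_mul (by norm_num)]
        apply Real.sqrt_le_sqrt
        push_cast; nlinarith
      linarith
    linarith
  · positivity

lemma measure_finset_sum_eq
    {Ω : Type*} [MeasureSpace Ω] [IsProbabilityMeasure (ℙ : Measure Ω)]
    (η : ℕ → Ω → ℤ)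
    (hη_meas : ∀ k, Measurable (η k))
    (hη_indep : iIndepFun η ℙ)
    (hη_one : ∀ k, ℙ {ω | η k ω = 1} = 1/2)
    (hη_negone : ∀ k, ℙ {ω | η k ω = -1} = 1/2)
    (s : Finset ℕ) (y : ℤ) :
    ℙ {ω | (∑ i ∈ s, η i ω) = y} = ENNReal.ofReal (binProb s.card y) := by
  induction s using Finset.induction_on generalizing y with
  | empty =>
    simp only [Finset.sum_empty, Finset.card_empty, binProb_zero]
    by_cases hy : (0 : ℤ) = y
    · rw [if_pos hy.symm]
      have : {ω : Ω | (0:ℤ) = y} = Set.univ := by ext ω; simp [hy]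
      rw [this]; simp
    · rw [if_neg (fun h => hy h.symm)]
      have : {ω : Ω | (0:ℤ) = y} = ∅ := by ext ω; simp [hy]
      rw [this]; simp
  | @insert a s ha ih =>
    have hSmeas : Measurable (fun ω => ∑ i ∈ s, η i ω) :=
      Finset.measurable_sum s (fun i _ => hη_meas i)
    have hindep : IndepFun (fun ω => ∑ i ∈ s, η i ω) (η a) ℙ := by
      have h := hη_indep.indepFun_finsetSum_of_notMem hη_meas ha
      have he : (∑ j ∈ s, η j) = fun ω => ∑ i ∈ s, η i ω := by
        ext ω; simp [Finset.sum_apply]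
      rwa [he] at h
    set S := fun ω => ∑ i ∈ s, η i ω with hS
    have hset : {ω | (∑ i ∈ insert a s, η i ω) = y}
        = {ω | η a ω + S ω = y} := by
      ext ω; simp [Finset.sum_insert ha, hS]
    rw [hset]
    have hA1 : MeasurableSet {ω | η a ω = 1} := (hη_meas a) (measurableSet_singleton 1)
    have hA2 : MeasurableSet {ω | η a ω = -1} := (hη_meas a) (measurableSet_singleton (-1))
    have hdisj : Disjoint {ω | η a ω = 1} {ω | η a ω = -1} := by
      rw [Set.disjoint_left]; intro ω h1 h2; simp at h1 h2; omega
    have hfull : ℙ ({ω | η a ω = 1} ∪ {ω | η a ω = -1}) = 1 := by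
      rw [measure_union hdisj hA2, hη_one a, hη_negone a]
      rw [ENNReal.div_add_div_same, one_add_one_eq_two]
      exact ENNReal.div_self two_ne_zero ENNReal.ofNat_ne_top
    have hnull : ℙ ({ω | η a ω = 1} ∪ {ω | η a ω = -1})ᶜ = 0 :=
      (prob_compl_eq_zero_iff (hA1.union hA2)).2 hfull
    have hE : ℙ {ω | η a ω + S ω = y}
        = ℙ ({ω | η a ω + S ω = y} ∩ ({ω | η a ω = 1} ∪ {ω | η a ω = -1})) :=
      (measure_inter_conull hnull).symm
    have hsplit : {ω | η a ω + S ω = y} ∩ ({ω | η a ω = 1} ∪ {ω | η a ω = -1})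
        = (S ⁻¹' {y - 1} ∩ (η a) ⁻¹' {1}) ∪ (S ⁻¹' {y + 1} ∩ (η a) ⁻¹' {-1}) := by
      ext ω
      simp only [Set.mem_inter_iff, Set.mem_union, Set.mem_setOf_eq, Set.mem_preimage,
        Set.mem_singleton_iff]
      constructor
      · rintro ⟨hsum, h1 | h1⟩
        · left; constructor; omega; exact h1
        · right; constructor; omega; exact h1
      · rintro (⟨h1, h2⟩ | ⟨h1, h2⟩)
        · constructor; omega; left; exact h2
        · constructor; omega; right; exact h2
    have hdisj2 : Disjoint (S ⁻¹' {y - 1} ∩ (η a) ⁻¹' {1}) (S ⁻¹' {y + 1} ∩ (η a) ⁻¹' {-1}) := by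
      rw [Set.disjoint_left]
      rintro ω ⟨-, h1⟩ ⟨-, h2⟩
      simp only [Set.mem_preimage, Set.mem_singleton_iff] at h1 h2
      omega
    have hmeas2 : MeasurableSet (S ⁻¹' {y + 1} ∩ (η a) ⁻¹' {-1}) :=
      (hSmeas (measurableSet_singleton _)).inter hA2
    have hp1 : ℙ (S ⁻¹' {y - 1} ∩ (η a) ⁻¹' {1})
        = ENNReal.ofReal (binProb s.card (y - 1)) * (1/2) := by
      rw [hindep.measure_inter_preimage_eq_mul _ _ (measurableSet_singleton _)
        (measurableSet_singleton _)]
      congr 1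
      · exact ih (y - 1)
      · exact hη_one a
    have hp2 : ℙ (S ⁻¹' {y + 1} ∩ (η a) ⁻¹' {-1})
        = ENNReal.ofReal (binProb s.card (y + 1)) * (1/2) := by
      rw [hindep.measure_inter_preimage_eq_mul _ _ (measurableSet_singleton _)
        (measurableSet_singleton _)]
      congr 1
      · exact ih (y + 1)
      · exact hη_negone a
    rw [hE, hsplit, measure_union hdisj2 hmeas2, hp1, hp2,
      Finset.card_insert_of_notMem ha, binProb_succ]
    have h2 : (1/2 : ℝ≥0∞) = ENNReal.ofReal (1/2) := by
      rw [ENNReal.ofReal_div_of_pos (by norm_num)]; norm_num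
    rw [h2, ← ENNReal.ofReal_mul (binProb_nonneg _ _), ← ENNReal.ofReal_mul (binProb_nonneg _ _),
      ← ENNReal.ofReal_add (mul_nonneg (binProb_nonneg _ _) (by norm_num))
        (mul_nonneg (binProb_nonneg _ _) (by norm_num))]
    congr 1
    ring

lemma measure_walk_pair
    {Ω : Type*} [MeasureSpace Ω] [IsProbabilityMeasure (ℙ : Measure Ω)]
    (η : ℕ → Ω → ℤ)
    (hη_meas : ∀ k, Measurable (η k))
    (hη_indep : iIndepFun η ℙ)
    (hη_one : ∀ k, ℙ {ω | η k ω = 1} = 1/2)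
    (hη_negone : ∀ k, ℙ {ω | η k ω = -1} = 1/2)
    (j k : ℕ) (hjk : j ≤ k) :
    ℙ {ω | walk η j ω = walk η k ω} = ENNReal.ofReal (binProb (k - j) 0) := by
  set s : Finset ℕ := (Finset.Ico j k).image (· + 1) with hs
  have hcard : s.card = k - j := by
    rw [hs, Finset.card_image_of_injective _ (fun a b h => by omega), Nat.card_Ico]
  have hsum : ∀ ω, (∑ i ∈ s, η i ω) = ∑ i ∈ Finset.Ico j k, η (i + 1) ω := by
    intro ω
    rw [hs, Finset.sum_image (fun a _ b _ h => by omega)]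
  have hset : {ω | walk η j ω = walk η k ω} = {ω | (∑ i ∈ s, η i ω) = 0} := by
    ext ω
    simp only [Set.mem_setOf_eq, hsum ω]
    have hw : walk η j ω + ∑ i ∈ Finset.Ico j k, η (i + 1) ω = walk η k ω :=
      Finset.sum_range_add_sum_Ico _ hjk
    constructor <;> intro h <;> omega
  rw [hset, measure_finset_sum_eq η hη_meas hη_indep hη_one hη_negone s 0, hcard]

lemma sum_one_div_sqrt_le (m : ℕ) :
    ∑ d ∈ Finset.range m, 1 / Real.sqrt (d + 1) ≤ 2 * Real.sqrt m := by
  have tele := Finset.sum_range_sub (fun d => 2 * Real.sqrt d) m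
  have hterm : ∀ d : ℕ, 1 / Real.sqrt (d + 1) ≤ 2 * Real.sqrt (d + 1) - 2 * Real.sqrt d := by
    intro d
    have hy : (0:ℝ) < Real.sqrt (d + 1) := Real.sqrt_pos.2 (by positivity)
    have hx : (0:ℝ) ≤ Real.sqrt d := Real.sqrt_nonneg _
    have hx2 : Real.sqrt d ^ 2 = (d:ℝ) := Real.sq_sqrt (by positivity)
    have hy2 : Real.sqrt (d + 1) ^ 2 = (d:ℝ) + 1 := Real.sq_sqrt (by positivity)
    rw [div_le_iff₀ hy]
    nlinarith [sq_nonneg (Real.sqrt (d + 1) - Real.sqrt d)]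
  calc ∑ d ∈ Finset.range m, 1 / Real.sqrt (d + 1)
      ≤ ∑ d ∈ Finset.range m, (2 * Real.sqrt (d + 1) - 2 * Real.sqrt d) :=
        Finset.sum_le_sum (fun d _ => hterm d)
    _ = 2 * Real.sqrt m - 2 * Real.sqrt ((0:ℕ):ℝ) := by
        rw [← tele]
        apply Finset.sum_congr rfl
        intro d _
        push_cast
        ring_nf
    _ ≤ 2 * Real.sqrt m := by norm_num

/-- There is a constant `K > 0` such that `E[Σ_y N_n(y)²] ≤ K n^{3/2}` for all `n ≥ 1`.
Since `|Y_k| ≤ k ≤ n`, the sum over `y ∈ ℤ` reduces to the finite sum over `y ∈ [-n, n]`. -/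
theorem expectation_sum_sq_localTime_le
    {Ω : Type*} [MeasureSpace Ω] [IsProbabilityMeasure (ℙ : Measure Ω)]
    (η : ℕ → Ω → ℤ)
    (hη_meas : ∀ k, Measurable (η k))
    (hη_indep : iIndepFun η ℙ)
    (hη_one : ∀ k, ℙ {ω | η k ω = 1} = 1/2)
    (hη_negone : ∀ k, ℙ {ω | η k ω = -1} = 1/2) :
    ∃ K > (0 : ℝ), ∀ n : ℕ, 1 ≤ n →
      (∫ ω, (∑ y ∈ Finset.Icc (-(n : ℤ)) n, (localTime η n y ω : ℝ) ^ 2) ∂ℙ)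
        ≤ K * (n : ℝ) ^ (3/2 : ℝ) := by
  refine ⟨16, by norm_num, fun n hn => ?_⟩
  -- measurability of the walk
  have hwmeas : ∀ j, Measurable (walk η j) := fun j =>
    Finset.measurable_sum _ (fun i _ => hη_meas (i + 1))
  have hEmeas : ∀ j k : ℕ, MeasurableSet {ω : Ω | walk η j ω = walk η k ω} := by
    intro j k
    have : {ω : Ω | walk η j ω = walk η k ω}
        = (fun ω => walk η j ω - walk η k ω) ⁻¹' {0} := by
      ext ω; simp [sub_eq_zero]
    rw [this]
    exact ((hwmeas j).sub (hwmeas k)) (measurableSet_singleton 0)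
  -- the indicator functions and their integrals
  set f : ℕ → ℕ → Ω → ℝ := fun j k ω => if walk η j ω = walk η k ω then (1:ℝ) else 0 with hf
  have hf_eq : ∀ j k, f j k = Set.indicator {ω : Ω | walk η j ω = walk η k ω} (fun _ => 1) := by
    intro j k; ext ω
    simp only [hf, Set.indicator_apply, Set.mem_setOf_eq]
  have hf_int : ∀ j k, Integrable (f j k) ℙ := by
    intro j k
    rw [hf_eq]
    exact (integrable_const 1).indicator (hEmeas j k)
  have hf_integral : ∀ j k, ∫ ω, f j k ω ∂ℙ = (ℙ {ω : Ω | walk η j ω = walk η k ω}).toReal := by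
    intro j k
    rw [hf_eq, integral_indicator_const (1:ℝ) (hEmeas j k), smul_eq_mul, mul_one]
    rfl
  -- pointwise bound
  have hinner : ∀ (ω : Ω) (j k : ℕ),
      (∑ y ∈ Finset.Icc (-(n : ℤ)) n,
        (if walk η j ω = y then (1:ℝ) else 0) * (if walk η k ω = y then (1:ℝ) else 0))
      ≤ f j k ω := by
    intro ω j k
    have e : ∀ y : ℤ, (if walk η j ω = y then (1:ℝ) else 0) * (if walk η k ω = y then (1:ℝ) else 0)
        = if y = walk η j ω then (if walk η j ω = walk η k ω then (1:ℝ) else 0) else 0 := by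
      intro y
      rcases eq_or_ne y (walk η j ω) with h1 | h1
      · subst h1
        rw [if_pos rfl, if_pos rfl, one_mul]
        rcases eq_or_ne (walk η k ω) (walk η j ω) with h2 | h2
        · rw [if_pos h2, if_pos h2.symm]
        · rw [if_neg h2, if_neg (Ne.symm h2)]
      · rw [if_neg h1, if_neg (Ne.symm h1), zero_mul]
    rw [Finset.sum_congr rfl (fun y _ => e y), Finset.sum_ite_eq' _ (walk η j ω)
      (fun _ => if walk η j ω = walk η k ω then (1:ℝ) else 0)]
    simp only [hf]
    split_ifs <;> norm_num
  have hpoint : ∀ ω, (∑ y ∈ Finset.Icc (-(n : ℤ)) n, (localTime η n y ω : ℝ) ^ 2)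
      ≤ ∑ j ∈ Finset.range (n+1), ∑ k ∈ Finset.range (n+1), f j k ω := by
    intro ω
    have hlt : ∀ y : ℤ, (localTime η n y ω : ℝ)
        = ∑ k ∈ Finset.range (n+1), (if walk η k ω = y then (1:ℝ) else 0) := by
      intro y
      rw [localTime, Finset.card_filter]
      push_cast
      rfl
    have expand : (∑ y ∈ Finset.Icc (-(n : ℤ)) n, (localTime η n y ω : ℝ) ^ 2)
        = ∑ j ∈ Finset.range (n+1), ∑ k ∈ Finset.range (n+1),
            ∑ y ∈ Finset.Icc (-(n : ℤ)) n,
              (if walk η j ω = y then (1:ℝ) else 0) * (if walk η k ω = y then (1:ℝ) else 0) := by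
      calc (∑ y ∈ Finset.Icc (-(n : ℤ)) n, (localTime η n y ω : ℝ) ^ 2)
          = ∑ y ∈ Finset.Icc (-(n : ℤ)) n, ∑ j ∈ Finset.range (n+1), ∑ k ∈ Finset.range (n+1),
              (if walk η j ω = y then (1:ℝ) else 0) * (if walk η k ω = y then (1:ℝ) else 0) := by
            apply Finset.sum_congr rfl
            intro y _
            rw [pow_two, hlt y, Finset.sum_mul_sum]
        _ = ∑ j ∈ Finset.range (n+1), ∑ y ∈ Finset.Icc (-(n : ℤ)) n,
              ∑ k ∈ Finset.range (n+1),
              (if walk η j ω = y then (1:ℝ) else 0) * (if walk η k ω = y then (1:ℝ) else 0) :=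
            Finset.sum_comm
        _ = ∑ j ∈ Finset.range (n+1), ∑ k ∈ Finset.range (n+1),
              ∑ y ∈ Finset.Icc (-(n : ℤ)) n,
              (if walk η j ω = y then (1:ℝ) else 0) * (if walk η k ω = y then (1:ℝ) else 0) := by
            exact Finset.sum_congr rfl (fun j _ => Finset.sum_comm)
    rw [expand]
    exact Finset.sum_le_sum (fun j _ => Finset.sum_le_sum (fun k _ => hinner ω j k))
  -- integral bound
  have hint_rhs : Integrable (fun ω => ∑ j ∈ Finset.range (n+1), ∑ k ∈ Finset.range (n+1), f j k ω) ℙ := by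
    apply integrable_finset_sum
    intro j _
    exact integrable_finset_sum _ (fun k _ => hf_int j k)
  have step_int : (∫ ω, (∑ y ∈ Finset.Icc (-(n : ℤ)) n, (localTime η n y ω : ℝ) ^ 2) ∂ℙ)
      ≤ ∑ j ∈ Finset.range (n+1), ∑ k ∈ Finset.range (n+1),
          (ℙ {ω : Ω | walk η j ω = walk η k ω}).toReal := by
    have h1 : (∫ ω, (∑ y ∈ Finset.Icc (-(n : ℤ)) n, (localTime η n y ω : ℝ) ^ 2) ∂ℙ)
        ≤ ∫ ω, (∑ j ∈ Finset.range (n+1), ∑ k ∈ Finset.range (n+1), f j k ω) ∂ℙ := by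
      apply integral_mono_of_nonneg
      · exact ae_of_all _ (fun ω => Finset.sum_nonneg (fun y _ => by positivity))
      · exact hint_rhs
      · exact ae_of_all _ hpoint
    have h2 : (∫ ω, (∑ j ∈ Finset.range (n+1), ∑ k ∈ Finset.range (n+1), f j k ω) ∂ℙ)
        = ∑ j ∈ Finset.range (n+1), ∑ k ∈ Finset.range (n+1),
            (ℙ {ω : Ω | walk η j ω = walk η k ω}).toReal := by
      rw [integral_finset_sum _ (fun j _ => integrable_finset_sum _ (fun k _ => hf_int j k))]
      apply Finset.sum_congr rfl
      intro j _
      rw [integral_finset_sum _ (fun k _ => hf_int j k)]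
      exact Finset.sum_congr rfl (fun k _ => hf_integral j k)
    linarith
  -- per-pair probability bound
  have hpair : ∀ j k : ℕ, (ℙ {ω : Ω | walk η j ω = walk η k ω}).toReal
      ≤ Real.sqrt 2 / Real.sqrt ((max j k - min j k : ℕ) + 1) := by
    intro j k
    rcases le_total j k with h | h
    · rw [measure_walk_pair η hη_meas hη_indep hη_one hη_negone j k h,
        ENNReal.toReal_ofReal (binProb_nonneg _ _), max_eq_right h, min_eq_left h]
      exact binProb_zero_le (k - j)
    · have hsetc : {ω : Ω | walk η j ω = walk η k ω} = {ω : Ω | walk η k ω = walk η j ω} := by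
        ext ω
        exact ⟨fun h' => h'.symm, fun h' => h'.symm⟩
      rw [hsetc, measure_walk_pair η hη_meas hη_indep hη_one hη_negone k j h,
        ENNReal.toReal_ofReal (binProb_nonneg _ _), max_eq_left h, min_eq_right h]
      exact binProb_zero_le (j - k)
  -- summation bound
  set g : ℕ → ℝ := fun d => Real.sqrt 2 / Real.sqrt (d + 1) with hg
  have hg_nonneg : ∀ d, 0 ≤ g d := fun d => by
    simp only [hg]; positivity
  have hS : ∑ d ∈ Finset.range (n+1), g d ≤ Real.sqrt 2 * (2 * Real.sqrt (n+1)) := by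
    have : ∑ d ∈ Finset.range (n+1), g d
        = Real.sqrt 2 * ∑ d ∈ Finset.range (n+1), 1 / Real.sqrt (d + 1) := by
      rw [Finset.mul_sum]
      apply Finset.sum_congr rfl
      intro d _
      simp only [hg]
      ring
    rw [this]
    have h := sum_one_div_sqrt_le (n+1)
    have hs2 : (0:ℝ) ≤ Real.sqrt 2 := Real.sqrt_nonneg 2
    push_cast at h ⊢
    nlinarith
  have hrow : ∀ j ∈ Finset.range (n+1),
      (∑ k ∈ Finset.range (n+1), g (max j k - min j k))
        ≤ 2 * ∑ d ∈ Finset.range (n+1), g d := by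
    intro j hj
    have hjn : j + 1 ≤ n + 1 := Finset.mem_range.1 hj
    rw [← Finset.sum_range_add_sum_Ico _ hjn]
    have hpart1 : (∑ k ∈ Finset.range (j+1), g (max j k - min j k))
        ≤ ∑ d ∈ Finset.range (n+1), g d := by
      have e1 : (∑ k ∈ Finset.range (j+1), g (max j k - min j k))
          = ∑ k ∈ Finset.range (j+1), g (j - k) := by
        apply Finset.sum_congr rfl
        intro k hk
        have hk' : k ≤ j := by
          have := Finset.mem_range.1 hk; omega
        rw [max_eq_left hk', min_eq_right hk']
      have e2 : (∑ k ∈ Finset.range (j+1), g (j - k)) = ∑ i ∈ Finset.range (j+1), g i := by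
        have h := Finset.sum_range_reflect g (j+1)
        simpa using h
      rw [e1, e2]
      exact Finset.sum_le_sum_of_subset_of_nonneg (Finset.range_subset_range.2 hjn)
        (fun i _ _ => hg_nonneg i)
    have hpart2 : (∑ k ∈ Finset.Ico (j+1) (n+1), g (max j k - min j k))
        ≤ ∑ d ∈ Finset.range (n+1), g d := by
      have e1 : (∑ k ∈ Finset.Ico (j+1) (n+1), g (max j k - min j k))
          = ∑ k ∈ Finset.Ico (j+1) (n+1), g (k - j) := by
        apply Finset.sum_congr rfl
        intro k hk
        have hk' : j ≤ k := by
          have := (Finset.mem_Ico.1 hk).1; omega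
        rw [max_eq_right hk', min_eq_left hk']
      rw [e1, Finset.sum_Ico_eq_sum_range]
      have e2 : (∑ i ∈ Finset.range (n + 1 - (j + 1)), g (j + 1 + i - j))
          = ∑ i ∈ Finset.range (n - j), g (i + 1) := by
        apply Finset.sum_congr (by congr 1; omega)
        intro i _
        congr 1
        omega
      rw [e2]
      calc (∑ i ∈ Finset.range (n - j), g (i + 1))
          ≤ ∑ i ∈ Finset.range n, g (i + 1) :=
            Finset.sum_le_sum_of_subset_of_nonneg
              (Finset.range_subset_range.2 (by omega)) (fun i _ _ => hg_nonneg _)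
        _ ≤ ∑ d ∈ Finset.range (n+1), g d := by
            rw [Finset.sum_range_succ' g n]
            exact le_add_of_nonneg_right (hg_nonneg 0)
    linarith
  -- putting everything together
  have htotal : (∑ j ∈ Finset.range (n+1), ∑ k ∈ Finset.range (n+1),
        (ℙ {ω : Ω | walk η j ω = walk η k ω}).toReal)
      ≤ ((n:ℝ)+1) * (2 * (Real.sqrt 2 * (2 * Real.sqrt ((n:ℝ)+1)))) := by
    calc (∑ j ∈ Finset.range (n+1), ∑ k ∈ Finset.range (n+1),
          (ℙ {ω : Ω | walk η j ω = walk η k ω}).toReal)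
        ≤ ∑ j ∈ Finset.range (n+1), ∑ k ∈ Finset.range (n+1), g (max j k - min j k) := by
          apply Finset.sum_le_sum
          intro j _
          apply Finset.sum_le_sum
          intro k _
          have h := hpair j k
          simpa [hg] using h
      _ ≤ ∑ j ∈ Finset.range (n+1), 2 * ∑ d ∈ Finset.range (n+1), g d :=
          Finset.sum_le_sum hrow
      _ = ((n:ℝ)+1) * (2 * ∑ d ∈ Finset.range (n+1), g d) := by
          rw [Finset.sum_const, Finset.card_range, nsmul_eq_mul]
          push_cast
          ring
      _ ≤ ((n:ℝ)+1) * (2 * (Real.sqrt 2 * (2 * Real.sqrt ((n:ℝ)+1)))) := by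
          apply mul_le_mul_of_nonneg_left _ (by positivity)
          apply mul_le_mul_of_nonneg_left _ (by norm_num)
          have := hS
          push_cast at this ⊢
          linarith
  have hn1 : (1:ℝ) ≤ (n:ℝ) := by exact_mod_cast hn
  have hnp : (0:ℝ) < (n:ℝ) := by linarith
  have h22 : Real.sqrt 2 * Real.sqrt 2 = 2 := Real.mul_self_sqrt (by norm_num)
  have hsn : Real.sqrt ((n:ℝ)+1) ≤ Real.sqrt 2 * Real.sqrt (n:ℝ) := by
    rw [← Real.sqrt_mul (by norm_num)]
    exact Real.sqrt_le_sqrt (by nlinarith)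
  have hA : ((n:ℝ)+1) * Real.sqrt ((n:ℝ)+1) ≤ (2*(n:ℝ)) * (Real.sqrt 2 * Real.sqrt (n:ℝ)) :=
    mul_le_mul (by linarith) hsn (Real.sqrt_nonneg _) (by positivity)
  have hrpow : (n:ℝ) ^ (3/2:ℝ) = (n:ℝ) * Real.sqrt (n:ℝ) := by
    rw [show (3/2:ℝ) = 1 + 1/2 by norm_num, Real.rpow_add hnp, Real.rpow_one,
      ← Real.sqrt_eq_rpow]
  have hfin : ((n:ℝ)+1) * (2 * (Real.sqrt 2 * (2 * Real.sqrt ((n:ℝ)+1))))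
      ≤ 16 * ((n:ℝ) * Real.sqrt (n:ℝ)) := by
    calc ((n:ℝ)+1) * (2 * (Real.sqrt 2 * (2 * Real.sqrt ((n:ℝ)+1))))
        = 4 * Real.sqrt 2 * (((n:ℝ)+1) * Real.sqrt ((n:ℝ)+1)) := by ring
      _ ≤ 4 * Real.sqrt 2 * ((2*(n:ℝ)) * (Real.sqrt 2 * Real.sqrt (n:ℝ))) :=
          mul_le_mul_of_nonneg_left hA (by positivity)
      _ = 8 * (Real.sqrt 2 * Real.sqrt 2) * ((n:ℝ) * Real.sqrt (n:ℝ)) := by ring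
      _ = 16 * ((n:ℝ) * Real.sqrt (n:ℝ)) := by rw [h22]; ring
  rw [hrpow]
  calc (∫ ω, (∑ y ∈ Finset.Icc (-(n : ℤ)) n, (localTime η n y ω : ℝ) ^ 2) ∂ℙ)
      ≤ ∑ j ∈ Finset.range (n+1), ∑ k ∈ Finset.range (n+1),
          (ℙ {ω : Ω | walk η j ω = walk η k ω}).toReal := step_int
    _ ≤ ((n:ℝ)+1) * (2 * (Real.sqrt 2 * (2 * Real.sqrt ((n:ℝ)+1)))) := htotal
    _ ≤ 16 * ((n:ℝ) * Real.sqrt (n:ℝ)) := hfin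
end
end

section
/- There exists a constant C > 0 such that for all n ≥ 1 and all x, y ∈ ℤ, E[ ( N_n(x) − N_n(y) )² ] ≤ C |x − y| n^{1/2}. -/
open MeasureTheory ProbabilityTheory Filter

set_option linter.unusedSectionVars false
set_option maxHeartbeats 1000000

noncomputable section

namespace SRWProof

variable {Ω : Type*} [MeasureSpace Ω] [IsProbabilityMeasure (ℙ : Measure Ω)]
  {η : ℕ → Ω → ℤ}

/-- Sum of steps over an index set. -/
def sumOn (η : ℕ → Ω → ℤ) (S : Finset ℕ) (ω : Ω) : ℤ := ∑ i ∈ S, η i ω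

lemma measurable_sumOn (hm : ∀ k, Measurable (η k)) (S : Finset ℕ) :
    Measurable (sumOn η S) :=
  Finset.measurable_sum S fun i _ => hm i

lemma walk_eq_sumOn (n : ℕ) : walk η n = sumOn η (Finset.Ioc 0 n) := by
  funext ω
  rw [sumOn, ← Finset.Ico_add_one_add_one_eq_Ioc, Finset.sum_Ico_eq_sum_range]
  simp only [Nat.add_sub_cancel, walk]
  exact Finset.sum_congr rfl fun i _ => by rw [Nat.zero_add, Nat.add_comm]

lemma sumOn_split (j m : ℕ) (ω : Ω) :
    sumOn η (Finset.Ioc 0 (j + m)) ω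
      = sumOn η (Finset.Ioc 0 j) ω + sumOn η (Finset.Ioc j (j + m)) ω :=
  (Finset.sum_Ioc_consecutive _ (Nat.zero_le j) (Nat.le_add_right j m)).symm

lemma sumOn_succ_top (j m : ℕ) (ω : Ω) :
    sumOn η (Finset.Ioc j (j + (m + 1))) ω
      = sumOn η (Finset.Ioc j (j + m)) ω + η (j + m + 1) ω :=
  Finset.sum_Ioc_succ_top (Nat.le_add_right j m) _

/-- Independence of sums over disjoint index sets. -/
lemma indepFun_sumOn (hm : ∀ k, Measurable (η k))
    (hi : iIndepFun η ℙ)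
    {S T : Finset ℕ} (h : Disjoint S T) :
    IndepFun (sumOn η S) (sumOn η T) ℙ := by
  have h1 := hi.indepFun_finset S T h hm
  have hφ : ∀ U : Finset ℕ, Measurable (fun v : U → ℤ => ∑ i : U, v i) := fun U =>
    Finset.measurable_sum Finset.univ fun i _ => measurable_pi_apply i
  have := h1.comp (hφ S) (hφ T)
  convert this using 1 <;> funext ω <;> rw [sumOn] <;>
    exact (Finset.sum_coe_sort _ _).symm



variable {Ω : Type*} [MeasureSpace Ω] [IsProbabilityMeasure (ℙ : Measure Ω)]
  {η : ℕ → Ω → ℤ}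

lemma integrable_of_bdd {f : Ω → ℝ} (hm : AEStronglyMeasurable f ℙ) {C : ℝ}
    (h : ∀ᵐ ω ∂ℙ, |f ω| ≤ C) : Integrable f ℙ :=
  ⟨hm, HasFiniteIntegral.of_bounded (C := C) (by simpa [Real.norm_eq_abs] using h)⟩

lemma eta_ae (hm : ∀ k, Measurable (η k))
    (h1 : ∀ k, ℙ {ω | η k ω = 1} = 1/2) (h2 : ∀ k, ℙ {ω | η k ω = -1} = 1/2) (k : ℕ) :
    ∀ᵐ ω ∂ℙ, η k ω = 1 ∨ η k ω = -1 := by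
  have hA : MeasurableSet {ω | η k ω = 1} := (hm k) (measurableSet_singleton 1)
  have hB : MeasurableSet {ω | η k ω = -1} := (hm k) (measurableSet_singleton (-1))
  have hd : Disjoint {ω | η k ω = 1} {ω | η k ω = -1} := by
    rw [Set.disjoint_left]
    intro ω hω1 hω2
    simp only [Set.mem_setOf_eq] at hω1 hω2
    omega
  have hu : ℙ ({ω | η k ω = 1} ∪ {ω | η k ω = -1}) = 1 := by
    rw [measure_union hd hB, h1, h2]
    rw [ENNReal.div_add_div_same]
    rw [one_add_one_eq_two]
    exact ENNReal.div_self two_ne_zero ENNReal.ofNat_ne_top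
  have hcompl : ℙ ({ω | η k ω = 1} ∪ {ω | η k ω = -1})ᶜ = 0 := by
    rw [measure_compl (hA.union hB) (measure_ne_top _ _), hu, measure_univ]
    simp
  filter_upwards [measure_eq_zero_iff_ae_notMem.mp hcompl] with ω hω
  simpa [Set.mem_union, Set.mem_setOf_eq, not_or] using not_not.mp hω

lemma integral_eta (hm : ∀ k, Measurable (η k))
    (h1 : ∀ k, ℙ {ω | η k ω = 1} = 1/2) (h2 : ∀ k, ℙ {ω | η k ω = -1} = 1/2) (k : ℕ) :
    ∫ ω, (η k ω : ℝ) ∂ℙ = 0 := by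
  have hA : MeasurableSet {ω | η k ω = 1} := (hm k) (measurableSet_singleton 1)
  have hB : MeasurableSet {ω | η k ω = -1} := (hm k) (measurableSet_singleton (-1))
  have key : (fun ω => (η k ω : ℝ))
      =ᵐ[ℙ] fun ω => Set.indicator {ω | η k ω = 1} (fun _ => (1:ℝ)) ω
        - Set.indicator {ω | η k ω = -1} (fun _ => (1:ℝ)) ω := by
    filter_upwards [eta_ae hm h1 h2 k] with ω hω
    rcases hω with h | h <;> simp [Set.indicator_apply, Set.mem_setOf_eq, h]
  rw [integral_congr_ae key, integral_sub ((integrable_const (1:ℝ)).indicator hA)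
    ((integrable_const (1:ℝ)).indicator hB), integral_indicator_const _ hA,
    integral_indicator_const _ hB, measureReal_def, measureReal_def, h1, h2]
  simp

lemma integral_indf {g : Ω → ℤ} (hg : Measurable g) (a : ℤ) :
    ∫ ω, (if g ω = a then (1:ℝ) else 0) ∂ℙ = (ℙ {ω | g ω = a}).toReal := by
  have h : (fun ω => if g ω = a then (1:ℝ) else 0)
      = Set.indicator {ω | g ω = a} (fun _ => (1:ℝ)) := by
    funext ω; simp [Set.indicator_apply, Set.mem_setOf_eq]
  have hs : MeasurableSet {ω | g ω = a} := hg (measurableSet_singleton a)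
  rw [h, integral_indicator_const _ hs]
  simp
  rfl

lemma integrable_indf {g : Ω → ℤ} (hg : Measurable g) (a : ℤ) :
    Integrable (fun ω => if g ω = a then (1:ℝ) else 0) ℙ := by
  refine integrable_of_bdd ?_ (C := 1) (Eventually.of_forall fun ω => by
    by_cases h : g ω = a <;> simp [h])
  exact ((measurable_from_top (f := fun z : ℤ => if z = a then (1:ℝ) else 0)).comp hg).aestronglyMeasurable

/-- Product of indicators over disjoint sums factorizes. -/
lemma integral_indf_mul (hm : ∀ k, Measurable (η k))
    (hi : iIndepFun η ℙ)
    {S T : Finset ℕ} (h : Disjoint S T) (a b : ℤ) :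
    ∫ ω, (if sumOn η S ω = a then (1:ℝ) else 0) * (if sumOn η T ω = b then (1:ℝ) else 0) ∂ℙ
      = (ℙ {ω | sumOn η S ω = a}).toReal * (ℙ {ω | sumOn η T ω = b}).toReal := by
  have hind := (indepFun_sumOn hm hi h).comp
    (measurable_from_top (f := fun z : ℤ => if z = a then (1:ℝ) else 0))
    (measurable_from_top (f := fun z : ℤ => if z = b then (1:ℝ) else 0))
  have := hind.integral_mul_eq_mul_integral
    (integrable_indf (measurable_sumOn hm S) a).aestronglyMeasurable (integrable_indf (measurable_sumOn hm T) b).aestronglyMeasurable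
  rw [Function.comp_def, Function.comp_def] at this
  rw [show (∫ ω, (if sumOn η S ω = a then (1:ℝ) else 0) * (if sumOn η T ω = b then (1:ℝ) else 0) ∂ℙ)
      = integral ℙ ((fun ω => if sumOn η S ω = a then (1:ℝ) else 0)
        * fun ω => if sumOn η T ω = b then (1:ℝ) else 0) from rfl]
  rw [this, integral_indf (measurable_sumOn hm S) a, integral_indf (measurable_sumOn hm T) b]


lemma measurable_comp_int {g : Ω → ℤ} (hg : Measurable g) (F : ℤ → ℝ) :
    Measurable (fun ω => F (g ω)) := (measurable_from_top (f := F)).comp hg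

lemma integrable_comp_int {g : Ω → ℤ} (hg : Measurable g) (F : ℤ → ℝ) {C : ℝ}
    (h : ∀ᵐ ω ∂ℙ, |F (g ω)| ≤ C) : Integrable (fun ω => F (g ω)) ℙ :=
  integrable_of_bdd (measurable_comp_int hg F).aestronglyMeasurable h

lemma eta_ae_all (hm : ∀ k, Measurable (η k))
    (h1 : ∀ k, ℙ {ω | η k ω = 1} = 1/2) (h2 : ∀ k, ℙ {ω | η k ω = -1} = 1/2)
    (S : Finset ℕ) : ∀ᵐ ω ∂ℙ, ∀ i ∈ S, η i ω = 1 ∨ η i ω = -1 := by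
  rw [eventually_all_finset]
  exact fun i _ => eta_ae hm h1 h2 i

lemma abs_sumOn_le (hm : ∀ k, Measurable (η k))
    (h1 : ∀ k, ℙ {ω | η k ω = 1} = 1/2) (h2 : ∀ k, ℙ {ω | η k ω = -1} = 1/2)
    (S : Finset ℕ) : ∀ᵐ ω ∂ℙ, |((sumOn η S ω : ℤ) : ℝ)| ≤ (S.card : ℝ) := by
  filter_upwards [eta_ae_all hm h1 h2 S] with ω hω
  have : ((sumOn η S ω : ℤ) : ℝ) = ∑ i ∈ S, ((η i ω : ℤ) : ℝ) := by
    rw [sumOn]; push_cast; ring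
  rw [this]
  calc |∑ i ∈ S, ((η i ω : ℤ) : ℝ)| ≤ ∑ i ∈ S, |((η i ω : ℤ) : ℝ)| :=
        Finset.abs_sum_le_sum_abs _ _
    _ ≤ ∑ _i ∈ S, (1 : ℝ) := Finset.sum_le_sum fun i hiS => by
        rcases hω i hiS with h | h <;> simp [h]
    _ = S.card := by simp

lemma abs_sign_cast_le (z : ℤ) : |((z.sign : ℤ) : ℝ)| ≤ 1 := by
  rcases lt_trichotomy z 0 with h | rfl | h
  · rw [Int.sign_eq_neg_one_iff_neg.mpr h]; norm_num
  · simp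
  · rw [Int.sign_eq_one_iff_pos.mpr h]; norm_num

/-- The discrete Tanaka pointwise identity over ℤ. -/
lemma tanaka_step_int (a e w : ℤ) (he : e = 1 ∨ e = -1) :
    |a + e - w| = |a - w| + (a - w).sign * e + (if a = w then 1 else 0) := by
  rcases he with rfl | rfl <;> rcases lt_trichotomy a w with h | rfl | h
  · have hs : (a - w).sign = -1 := Int.sign_eq_neg_one_iff_neg.mpr (by omega)
    rw [hs, if_neg (by omega), abs_of_nonpos (by omega), abs_of_neg (by omega)]; ring
  · simp
  · have hs : (a - w).sign = 1 := Int.sign_eq_one_iff_pos.mpr (by omega)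
    rw [hs, if_neg (by omega), abs_of_pos (by omega), abs_of_pos (by omega)]; ring
  · have hs : (a - w).sign = -1 := Int.sign_eq_neg_one_iff_neg.mpr (by omega)
    rw [hs, if_neg (by omega), abs_of_neg (by omega), abs_of_neg (by omega)]; ring
  · simp
  · have hs : (a - w).sign = 1 := Int.sign_eq_one_iff_pos.mpr (by omega)
    rw [hs, if_neg (by omega), abs_of_nonneg (by omega), abs_of_pos (by omega)]; ring

/-- Discrete Tanaka formula in expectation, for the walk increments after time `j`. -/
lemma tanaka (hm : ∀ k, Measurable (η k)) (hi : iIndepFun η ℙ)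
    (h1 : ∀ k, ℙ {ω | η k ω = 1} = 1/2) (h2 : ∀ k, ℙ {ω | η k ω = -1} = 1/2)
    (j M : ℕ) (w : ℤ) :
    ∑ m ∈ Finset.range M, (ℙ {ω | sumOn η (Finset.Ioc j (j+m)) ω = w}).toReal
      = (∫ ω, |((sumOn η (Finset.Ioc j (j+M)) ω : ℤ) : ℝ) - (w : ℝ)| ∂ℙ) - |(w : ℝ)| := by
  induction M with
  | zero => simp [sumOn, Finset.Ioc_self]
  | succ M ih =>
    set Z : Ω → ℤ := sumOn η (Finset.Ioc j (j+M)) with hZ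
    have hmZ : Measurable Z := measurable_sumOn hm _
    set t : ℕ := j + M + 1 with ht
    -- pointwise a.e. identity
    have hae : (fun ω => |((sumOn η (Finset.Ioc j (j+(M+1))) ω : ℤ) : ℝ) - (w:ℝ)|)
        =ᵐ[ℙ] fun ω => |((Z ω : ℤ) : ℝ) - (w:ℝ)|
          + (((Z ω - w).sign : ℤ) : ℝ) * ((η t ω : ℤ) : ℝ)
          + (if Z ω = w then (1:ℝ) else 0) := by
      filter_upwards [eta_ae hm h1 h2 t] with ω hω
      have hsplit : sumOn η (Finset.Ioc j (j+(M+1))) ω = Z ω + η t ω := sumOn_succ_top j M ω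
      have hint := tanaka_step_int (Z ω) (η t ω) w hω
      have := congrArg (fun z : ℤ => (z : ℝ)) hint
      rw [hsplit]
      push_cast at this ⊢
      rw [this]
    -- integrability of the three pieces
    have hint1 : Integrable (fun ω => |((Z ω : ℤ) : ℝ) - (w:ℝ)|) ℙ := by
      refine integrable_comp_int hmZ (fun z => |((z:ℤ):ℝ) - (w:ℝ)|) (C := (M : ℝ) + |(w:ℝ)|) ?_
      filter_upwards [abs_sumOn_le hm h1 h2 (Finset.Ioc j (j+M))] with ω hω
      have hcard : ((Finset.Ioc j (j+M)).card : ℝ) = M := by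
        rw [Nat.card_Ioc]; simp
      rw [abs_abs]
      calc |((Z ω : ℤ) : ℝ) - (w:ℝ)| ≤ |((Z ω : ℤ) : ℝ)| + |(w:ℝ)| := abs_sub _ _
        _ ≤ (M : ℝ) + |(w:ℝ)| := by rw [← hcard]; exact add_le_add_left hω _
    have hint2 : Integrable (fun ω => (((Z ω - w).sign : ℤ) : ℝ) * ((η t ω : ℤ) : ℝ)) ℙ := by
      refine integrable_of_bdd ?_ (C := 1) ?_
      · exact ((measurable_comp_int hmZ (fun z => (((z - w).sign : ℤ) : ℝ))).mul
          (measurable_comp_int (hm t) (fun z => ((z:ℤ):ℝ)))).aestronglyMeasurable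
      · filter_upwards [eta_ae hm h1 h2 t] with ω hω
        rw [abs_mul]
        have hsg : |(((Z ω - w).sign : ℤ) : ℝ)| ≤ 1 := abs_sign_cast_le _
        have hη1 : |((η t ω : ℤ) : ℝ)| = 1 := by rcases hω with h | h <;> simp [h]
        rw [hη1, mul_one]; exact hsg
    have hint3 : Integrable (fun ω => if Z ω = w then (1:ℝ) else 0) ℙ := integrable_indf hmZ w
    -- the middle integral vanishes by independence
    have hmid : ∫ ω, (((Z ω - w).sign : ℤ) : ℝ) * ((η t ω : ℤ) : ℝ) ∂ℙ = 0 := by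
      have hdisj : Disjoint (Finset.Ioc j (j+M)) ({t} : Finset ℕ) := by
        simp [Finset.disjoint_singleton_right, ht]
      have hsing : sumOn η ({t} : Finset ℕ) = η t := by
        funext ω; simp [sumOn]
      have hindep := (indepFun_sumOn hm hi hdisj).comp
        (measurable_from_top (f := fun z : ℤ => (((z - w).sign : ℤ) : ℝ)))
        (measurable_from_top (f := fun z : ℤ => ((z:ℤ):ℝ)))
      rw [hsing] at hindep
      have hintl : Integrable (fun ω => (((Z ω - w).sign : ℤ) : ℝ)) ℙ := by
        exact integrable_comp_int hmZ (fun z => (((z - w).sign : ℤ) : ℝ)) (C := 1)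
          (Eventually.of_forall fun ω => abs_sign_cast_le _)
      have hintr : Integrable (fun ω => ((η t ω : ℤ) : ℝ)) ℙ := by
        refine integrable_comp_int (hm t) (fun z => ((z:ℤ):ℝ)) (C := 1) ?_
        filter_upwards [eta_ae hm h1 h2 t] with ω hω
        rcases hω with h | h <;> simp [h]
      have := hindep.integral_mul_eq_mul_integral hintl.aestronglyMeasurable hintr.aestronglyMeasurable
      rw [Function.comp_def, Function.comp_def] at this
      calc ∫ ω, (((Z ω - w).sign : ℤ) : ℝ) * ((η t ω : ℤ) : ℝ) ∂ℙ
          = (∫ ω, (((Z ω - w).sign : ℤ) : ℝ) ∂ℙ) * ∫ ω, ((η t ω : ℤ) : ℝ) ∂ℙ := this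
        _ = 0 := by rw [integral_eta hm h1 h2 t, mul_zero]
    have key : (∫ ω, |((sumOn η (Finset.Ioc j (j+(M+1))) ω : ℤ) : ℝ) - (w:ℝ)| ∂ℙ)
        = (∫ ω, |((Z ω : ℤ) : ℝ) - (w:ℝ)| ∂ℙ)
          + (ℙ {ω | Z ω = w}).toReal := by
      have hsum12 : Integrable (fun ω => |((Z ω : ℤ) : ℝ) - (w:ℝ)|
          + (((Z ω - w).sign : ℤ) : ℝ) * ((η t ω : ℤ) : ℝ)) ℙ := hint1.add hint2
      rw [integral_congr_ae hae, integral_add hsum12 hint3,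
        integral_add hint1 hint2, hmid, integral_indf hmZ w]
      ring
    rw [Finset.sum_range_succ, ih, key]
    ring


lemma integrable_eta_cast (hm : ∀ k, Measurable (η k))
    (h1 : ∀ k, ℙ {ω | η k ω = 1} = 1/2) (h2 : ∀ k, ℙ {ω | η k ω = -1} = 1/2) (i : ℕ) :
    Integrable (fun ω => ((η i ω : ℤ) : ℝ)) ℙ := by
  refine integrable_comp_int (hm i) (fun z => ((z:ℤ):ℝ)) (C := 1) ?_
  filter_upwards [eta_ae hm h1 h2 i] with ω hω
  rcases hω with h | h <;> simp [h]

lemma integrable_eta_mul (hm : ∀ k, Measurable (η k))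
    (h1 : ∀ k, ℙ {ω | η k ω = 1} = 1/2) (h2 : ∀ k, ℙ {ω | η k ω = -1} = 1/2) (i l : ℕ) :
    Integrable (fun ω => ((η i ω : ℤ) : ℝ) * ((η l ω : ℤ) : ℝ)) ℙ := by
  refine integrable_of_bdd ((measurable_comp_int (hm i) (fun z => ((z:ℤ):ℝ))).mul
    (measurable_comp_int (hm l) (fun z => ((z:ℤ):ℝ)))).aestronglyMeasurable (C := 1) ?_
  filter_upwards [eta_ae hm h1 h2 i, eta_ae hm h1 h2 l] with ω hi hl
  rcases hi with h | h <;> rcases hl with h' | h' <;> simp [h, h']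

lemma integral_sq_sumOn (hm : ∀ k, Measurable (η k))
    (hi : iIndepFun η ℙ)
    (h1 : ∀ k, ℙ {ω | η k ω = 1} = 1/2) (h2 : ∀ k, ℙ {ω | η k ω = -1} = 1/2)
    (S : Finset ℕ) :
    ∫ ω, (((sumOn η S ω : ℤ) : ℝ))^2 ∂ℙ = (S.card : ℝ) := by
  have hpt : ∀ ω, (((sumOn η S ω : ℤ) : ℝ))^2
      = ∑ i ∈ S, ∑ l ∈ S, ((η i ω : ℤ) : ℝ) * ((η l ω : ℤ) : ℝ) := by
    intro ω
    have h : ((sumOn η S ω : ℤ) : ℝ) = ∑ i ∈ S, ((η i ω : ℤ) : ℝ) := by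
      rw [sumOn]; push_cast; ring
    rw [h, sq, Finset.sum_mul_sum]
  simp only [hpt]
  rw [integral_finset_sum S (fun i _ =>
    integrable_finset_sum S (fun l _ => integrable_eta_mul hm h1 h2 i l))]
  have hterm : ∀ i ∈ S, (∫ ω, ∑ l ∈ S, ((η i ω : ℤ) : ℝ) * ((η l ω : ℤ) : ℝ) ∂ℙ)
      = ∑ l ∈ S, (if i = l then (1:ℝ) else 0) := by
    intro i hiS
    rw [integral_finset_sum S (fun l _ => integrable_eta_mul hm h1 h2 i l)]
    refine Finset.sum_congr rfl fun l hl => ?_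
    by_cases hil : i = l
    · subst hil
      rw [if_pos rfl]
      have hone : (fun ω => ((η i ω : ℤ) : ℝ) * ((η i ω : ℤ) : ℝ)) =ᵐ[ℙ] fun _ => (1:ℝ) := by
        filter_upwards [eta_ae hm h1 h2 i] with ω hω
        rcases hω with h | h <;> simp [h]
      rw [integral_congr_ae hone]; simp
    · rw [if_neg hil]
      have hind := (hi.indepFun hil).comp
        (measurable_from_top (f := fun z : ℤ => ((z:ℤ):ℝ)))
        (measurable_from_top (f := fun z : ℤ => ((z:ℤ):ℝ)))
      have := hind.integral_mul_eq_mul_integral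
        (integrable_eta_cast hm h1 h2 i).aestronglyMeasurable (integrable_eta_cast hm h1 h2 l).aestronglyMeasurable
      rw [Function.comp_def, Function.comp_def] at this
      calc (∫ ω, ((η i ω : ℤ) : ℝ) * ((η l ω : ℤ) : ℝ) ∂ℙ)
          = (∫ ω, ((η i ω : ℤ) : ℝ) ∂ℙ) * ∫ ω, ((η l ω : ℤ) : ℝ) ∂ℙ := this
        _ = 0 := by rw [integral_eta hm h1 h2 i, zero_mul]
  rw [Finset.sum_congr rfl hterm]
  have : ∀ i ∈ S, ∑ l ∈ S, (if i = l then (1:ℝ) else 0) = 1 := by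
    intro i hiS
    rw [Finset.sum_ite_eq S i (fun _ => (1:ℝ))]
    exact if_pos hiS
  rw [Finset.sum_congr rfl this]
  simp

lemma integrable_abs_sub_sumOn (hm : ∀ k, Measurable (η k))
    (h1 : ∀ k, ℙ {ω | η k ω = 1} = 1/2) (h2 : ∀ k, ℙ {ω | η k ω = -1} = 1/2)
    (S : Finset ℕ) (w : ℤ) :
    Integrable (fun ω => |((sumOn η S ω : ℤ) : ℝ) - (w:ℝ)|) ℙ := by
  refine integrable_comp_int (measurable_sumOn hm S)
    (fun z => |((z:ℤ):ℝ) - (w:ℝ)|) (C := (S.card : ℝ) + |(w:ℝ)|) ?_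
  filter_upwards [abs_sumOn_le hm h1 h2 S] with ω hω
  rw [abs_abs]
  calc |((sumOn η S ω : ℤ) : ℝ) - (w:ℝ)| ≤ |((sumOn η S ω : ℤ) : ℝ)| + |(w:ℝ)| := abs_sub _ _
    _ ≤ (S.card : ℝ) + |(w:ℝ)| := add_le_add_left hω _

lemma integral_abs_sumOn_le (hm : ∀ k, Measurable (η k))
    (hi : iIndepFun η ℙ)
    (h1 : ∀ k, ℙ {ω | η k ω = 1} = 1/2) (h2 : ∀ k, ℙ {ω | η k ω = -1} = 1/2)
    (S : Finset ℕ) :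
    ∫ ω, |((sumOn η S ω : ℤ) : ℝ)| ∂ℙ ≤ Real.sqrt S.card := by
  rcases S.eq_empty_or_nonempty with rfl | hS
  · simp [sumOn]
  set t : ℝ := Real.sqrt S.card with htdef
  have hcard : (0:ℝ) < S.card := by exact_mod_cast Finset.card_pos.mpr hS
  have ht : 0 < t := Real.sqrt_pos.mpr hcard
  have ht2 : t^2 = S.card := Real.sq_sqrt hcard.le
  have hpt : ∀ v : ℝ, |v| ≤ v^2/(2*t) + t/2 := by
    intro v
    rw [div_add_div _ _ (by positivity) (by norm_num : (2:ℝ) ≠ 0), le_div_iff₀ (by positivity)]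
    nlinarith [sq_nonneg (|v| - t), sq_abs v, abs_nonneg v]
  have hsq : Integrable (fun ω => (((sumOn η S ω : ℤ) : ℝ))^2) ℙ := by
    refine integrable_comp_int (measurable_sumOn hm S)
      (fun z => ((z:ℤ):ℝ)^2) (C := (S.card : ℝ)^2) ?_
    filter_upwards [abs_sumOn_le hm h1 h2 S] with ω hω
    rw [abs_of_nonneg (sq_nonneg _)]
    calc (((sumOn η S ω : ℤ) : ℝ))^2 = |((sumOn η S ω : ℤ) : ℝ)|^2 := (sq_abs _).symm
      _ ≤ (S.card : ℝ)^2 := by nlinarith [abs_nonneg ((sumOn η S ω : ℤ) : ℝ)]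
  have habs : Integrable (fun ω => |((sumOn η S ω : ℤ) : ℝ)|) ℙ := by
    have := integrable_abs_sub_sumOn hm h1 h2 S 0
    simpa using this
  calc ∫ ω, |((sumOn η S ω : ℤ) : ℝ)| ∂ℙ
      ≤ ∫ ω, ((((sumOn η S ω : ℤ) : ℝ))^2/(2*t) + t/2) ∂ℙ := by
        refine integral_mono habs ?_ (fun ω => hpt _)
        exact (hsq.div_const (2*t)).add (integrable_const _)
    _ = (∫ ω, (((sumOn η S ω : ℤ) : ℝ))^2 ∂ℙ)/(2*t) + t/2 := by
        rw [integral_add (hsq.div_const (2*t)) (integrable_const _), integral_div,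
          integral_const]
        simp
    _ = (S.card : ℝ)/(2*t) + t/2 := by rw [integral_sq_sumOn hm hi h1 h2 S]
    _ = t := by rw [← ht2]; field_simp; ring


lemma sum_prob_diff_le (hm : ∀ k, Measurable (η k))
    (hi : iIndepFun η ℙ)
    (h1 : ∀ k, ℙ {ω | η k ω = 1} = 1/2) (h2 : ∀ k, ℙ {ω | η k ω = -1} = 1/2)
    (j M : ℕ) (w : ℤ) :
    ∑ m ∈ Finset.range M, ((ℙ {ω | sumOn η (Finset.Ioc j (j+m)) ω = 0}).toReal
      - (ℙ {ω | sumOn η (Finset.Ioc j (j+m)) ω = w}).toReal) ≤ 2 * |(w:ℝ)| := by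
  rw [Finset.sum_sub_distrib, tanaka hm hi h1 h2 j M 0, tanaka hm hi h1 h2 j M w]
  have hmono : (∫ ω, |((sumOn η (Finset.Ioc j (j+M)) ω : ℤ) : ℝ) - ((0:ℤ):ℝ)| ∂ℙ)
      ≤ ∫ ω, (|((sumOn η (Finset.Ioc j (j+M)) ω : ℤ) : ℝ) - (w:ℝ)| + |(w:ℝ)|) ∂ℙ := by
    refine integral_mono (integrable_abs_sub_sumOn hm h1 h2 _ 0)
      ((integrable_abs_sub_sumOn hm h1 h2 _ w).add (integrable_const _)) fun ω => ?_
    simp only [Int.cast_zero, sub_zero]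
    calc |((sumOn η (Finset.Ioc j (j+M)) ω : ℤ) : ℝ)|
        = |(((sumOn η (Finset.Ioc j (j+M)) ω : ℤ) : ℝ) - (w:ℝ)) + (w:ℝ)| := by ring_nf
      _ ≤ |((sumOn η (Finset.Ioc j (j+M)) ω : ℤ) : ℝ) - (w:ℝ)| + |(w:ℝ)| := abs_add_le _ _
  rw [integral_add (integrable_abs_sub_sumOn hm h1 h2 _ w) (integrable_const _),
    integral_const] at hmono
  simp only [Measure.real, measure_univ, ENNReal.toReal_one, smul_eq_mul, one_mul] at hmono
  have h0 : |((0:ℤ):ℝ)| = 0 := by norm_num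
  linarith [hmono]

lemma sum_prob_walk_le (hm : ∀ k, Measurable (η k))
    (hi : iIndepFun η ℙ)
    (h1 : ∀ k, ℙ {ω | η k ω = 1} = 1/2) (h2 : ∀ k, ℙ {ω | η k ω = -1} = 1/2)
    (M : ℕ) (a : ℤ) :
    ∑ m ∈ Finset.range M, (ℙ {ω | walk η m ω = a}).toReal ≤ Real.sqrt M := by
  have htan := tanaka hm hi h1 h2 0 M a
  simp only [Nat.zero_add] at htan
  have hwk : ∀ m, {ω | walk η m ω = a} = {ω | sumOn η (Finset.Ioc 0 m) ω = a} := by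
    intro m; rw [walk_eq_sumOn]
  simp only [hwk]
  rw [htan]
  have hmono : (∫ ω, |((sumOn η (Finset.Ioc 0 M) ω : ℤ) : ℝ) - (a:ℝ)| ∂ℙ)
      ≤ ∫ ω, (|((sumOn η (Finset.Ioc 0 M) ω : ℤ) : ℝ)| + |(a:ℝ)|) ∂ℙ := by
    refine integral_mono (integrable_abs_sub_sumOn hm h1 h2 _ a)
      (((by simpa using integrable_abs_sub_sumOn hm h1 h2 (Finset.Ioc 0 M) 0) :
        Integrable (fun ω => |((sumOn η (Finset.Ioc 0 M) ω : ℤ) : ℝ)|) ℙ).add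
        (integrable_const _)) fun ω => abs_sub _ _
  rw [integral_add (by simpa using integrable_abs_sub_sumOn hm h1 h2 (Finset.Ioc 0 M) 0)
    (integrable_const _), integral_const] at hmono
  simp only [Measure.real, measure_univ, ENNReal.toReal_one, smul_eq_mul, one_mul] at hmono
  have hA := integral_abs_sumOn_le hm hi h1 h2 (Finset.Ioc 0 M)
  have hcard : ((Finset.Ioc 0 M).card : ℝ) = (M : ℝ) := by rw [Nat.card_Ioc]; simp
  rw [hcard] at hA
  linarith [hmono, hA]

lemma double_sum_symm (N : ℕ) (c : ℕ → ℕ → ℝ) (hsymm : ∀ j k, c j k = c k j) :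
    ∑ j ∈ Finset.range N, ∑ k ∈ Finset.range N, c j k
      = 2 * (∑ j ∈ Finset.range N, ∑ m ∈ Finset.range (N - j), c j (j + m))
        - ∑ j ∈ Finset.range N, c j j := by
  induction N with
  | zero => simp
  | succ N ih =>
    have hT : ∑ j ∈ Finset.range (N+1), ∑ k ∈ Finset.range (N+1), c j k
        = (∑ j ∈ Finset.range N, ∑ k ∈ Finset.range N, c j k)
          + 2*(∑ j ∈ Finset.range N, c j N) + c N N := by
      rw [Finset.sum_range_succ]
      have hin : ∀ j ∈ Finset.range N, ∑ k ∈ Finset.range (N+1), c j k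
          = (∑ k ∈ Finset.range N, c j k) + c j N := fun j _ => Finset.sum_range_succ _ _
      rw [Finset.sum_congr rfl hin, Finset.sum_add_distrib,
        Finset.sum_range_succ (fun k => c N k)]
      have hsw : ∑ k ∈ Finset.range N, c N k = ∑ k ∈ Finset.range N, c k N :=
        Finset.sum_congr rfl fun k _ => hsymm N k
      rw [hsw]; ring
    have hU : ∑ j ∈ Finset.range (N+1), ∑ m ∈ Finset.range (N+1-j), c j (j+m)
        = (∑ j ∈ Finset.range N, ∑ m ∈ Finset.range (N-j), c j (j+m))
          + (∑ j ∈ Finset.range N, c j N) + c N N := by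
      rw [Finset.sum_range_succ]
      have hjN : ∑ m ∈ Finset.range (N+1-N), c N (N+m) = c N N := by
        rw [show N+1-N = 1 from by omega]; simp
      have hstep : ∀ j ∈ Finset.range N, ∑ m ∈ Finset.range (N+1-j), c j (j+m)
          = (∑ m ∈ Finset.range (N-j), c j (j+m)) + c j N := by
        intro j hj
        have hj' : j < N := Finset.mem_range.mp hj
        rw [show N+1-j = (N-j)+1 from by omega, Finset.sum_range_succ,
          show j + (N-j) = N from by omega]
      rw [Finset.sum_congr rfl hstep, Finset.sum_add_distrib, hjN]
    have hD : ∑ j ∈ Finset.range (N+1), c j j = (∑ j ∈ Finset.range N, c j j) + c N N :=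
      Finset.sum_range_succ _ _
    rw [hT, hU, hD, ih]; ring


lemma integrable_ind_mul_ind (hm : ∀ k, Measurable (η k)) (S T : Finset ℕ) (a b : ℤ) :
    Integrable (fun ω => (if sumOn η S ω = a then (1:ℝ) else 0)
      * (if sumOn η T ω = b then (1:ℝ) else 0)) ℙ := by
  refine integrable_of_bdd ((measurable_comp_int (measurable_sumOn hm S)
    (fun z => if z = a then (1:ℝ) else 0)).mul (measurable_comp_int (measurable_sumOn hm T)
    (fun z => if z = b then (1:ℝ) else 0))).aestronglyMeasurable (C := 1)
    (Eventually.of_forall fun ω => ?_)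
  by_cases h : sumOn η S ω = a <;> by_cases h' : sumOn η T ω = b <;> simp [h, h']

lemma integral_F_mul (hm : ∀ k, Measurable (η k))
    (hi : iIndepFun η ℙ)
    (x y : ℤ) (j m : ℕ) :
    ∫ ω, ((if walk η j ω = x then (1:ℝ) else 0) - (if walk η j ω = y then 1 else 0))
        * ((if walk η (j+m) ω = x then (1:ℝ) else 0) - (if walk η (j+m) ω = y then 1 else 0)) ∂ℙ
      = (ℙ {ω | walk η j ω = x}).toReal
          * ((ℙ {ω | sumOn η (Finset.Ioc j (j+m)) ω = 0}).toReal
            - (ℙ {ω | sumOn η (Finset.Ioc j (j+m)) ω = y - x}).toReal)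
        + (ℙ {ω | walk η j ω = y}).toReal
          * ((ℙ {ω | sumOn η (Finset.Ioc j (j+m)) ω = 0}).toReal
            - (ℙ {ω | sumOn η (Finset.Ioc j (j+m)) ω = x - y}).toReal) := by
  set A : Finset ℕ := Finset.Ioc 0 j with hA
  set B : Finset ℕ := Finset.Ioc j (j+m) with hB
  have hd : Disjoint A B := by
    rw [Finset.disjoint_left]
    intro i hiA hiB
    rw [hA, Finset.mem_Ioc] at hiA
    rw [hB, Finset.mem_Ioc] at hiB
    omega
  have hprod : ∀ (a b : ℤ) (ω : Ω),
      (if walk η j ω = a then (1:ℝ) else 0) * (if walk η (j+m) ω = b then 1 else 0)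
      = (if sumOn η A ω = a then (1:ℝ) else 0) * (if sumOn η B ω = b - a then 1 else 0) := by
    intro a b ω
    rw [walk_eq_sumOn j, walk_eq_sumOn (j+m)]
    by_cases hja : sumOn η A ω = a
    · rw [if_pos hja, one_mul, one_mul]
      have hiff : sumOn η (Finset.Ioc 0 (j+m)) ω = b ↔ sumOn η B ω = b - a := by
        rw [sumOn_split j m ω]
        have : sumOn η (Finset.Ioc 0 j) ω = a := hja
        rw [this, hB]
        omega
      exact if_congr hiff rfl rfl
    · rw [if_neg hja, zero_mul, zero_mul]
  have hpt : ∀ ω : Ω,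
      ((if walk η j ω = x then (1:ℝ) else 0) - (if walk η j ω = y then 1 else 0))
        * ((if walk η (j+m) ω = x then (1:ℝ) else 0) - (if walk η (j+m) ω = y then 1 else 0))
      = (if sumOn η A ω = x then (1:ℝ) else 0) * (if sumOn η B ω = 0 then 1 else 0)
        - (if sumOn η A ω = x then (1:ℝ) else 0) * (if sumOn η B ω = y - x then 1 else 0)
        - (if sumOn η A ω = y then (1:ℝ) else 0) * (if sumOn η B ω = x - y then 1 else 0)
        + (if sumOn η A ω = y then (1:ℝ) else 0) * (if sumOn η B ω = 0 then 1 else 0) := by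
    intro ω
    have e1 := hprod x x ω; have e2 := hprod x y ω
    have e3 := hprod y x ω; have e4 := hprod y y ω
    rw [sub_self] at e1; rw [sub_self] at e4
    nlinarith [e1, e2, e3, e4]
  simp only [hpt]
  have i1 := integrable_ind_mul_ind hm A B x 0
  have i2 := integrable_ind_mul_ind hm A B x (y-x)
  have i3 := integrable_ind_mul_ind hm A B y (x-y)
  have i4 := integrable_ind_mul_ind hm A B y 0
  have i12 : Integrable (fun ω => (if sumOn η A ω = x then (1:ℝ) else 0)
      * (if sumOn η B ω = 0 then 1 else 0)
      - (if sumOn η A ω = x then (1:ℝ) else 0) * (if sumOn η B ω = y - x then 1 else 0)) ℙ :=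
    i1.sub i2
  have i123 : Integrable (fun ω => (if sumOn η A ω = x then (1:ℝ) else 0)
      * (if sumOn η B ω = 0 then 1 else 0)
      - (if sumOn η A ω = x then (1:ℝ) else 0) * (if sumOn η B ω = y - x then 1 else 0)
      - (if sumOn η A ω = y then (1:ℝ) else 0) * (if sumOn η B ω = x - y then 1 else 0)) ℙ :=
    i12.sub i3
  rw [integral_add i123 i4, integral_sub i12 i3, integral_sub i1 i2,
    integral_indf_mul hm hi hd x 0, integral_indf_mul hm hi hd x (y-x),
    integral_indf_mul hm hi hd y (x-y), integral_indf_mul hm hi hd y 0]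
  have hwx : {ω | walk η j ω = x} = {ω | sumOn η A ω = x} := by rw [walk_eq_sumOn j]
  have hwy : {ω | walk η j ω = y} = {ω | sumOn η A ω = y} := by rw [walk_eq_sumOn j]
  rw [hwx, hwy]
  ring


lemma main_bound (hm : ∀ k, Measurable (η k))
    (hi : iIndepFun η ℙ)
    (h1 : ∀ k, ℙ {ω | η k ω = 1} = 1/2) (h2 : ∀ k, ℙ {ω | η k ω = -1} = 1/2)
    (n : ℕ) (x y : ℤ) :
    ∫ ω, (∑ k ∈ Finset.range (n+1), ((if walk η k ω = x then (1:ℝ) else 0)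
        - (if walk η k ω = y then 1 else 0)))^2 ∂ℙ
      ≤ 8 * |(x:ℝ) - (y:ℝ)| * Real.sqrt ((n:ℝ)+1) := by
  have hwm : ∀ k, Measurable (walk η k) := fun k => by
    rw [walk_eq_sumOn]; exact measurable_sumOn hm _
  have hFmeas : ∀ k : ℕ, Measurable (fun ω => (if walk η k ω = x then (1:ℝ) else 0)
      - (if walk η k ω = y then 1 else 0)) := fun k =>
    (measurable_comp_int (hwm k) (fun z => if z = x then (1:ℝ) else 0)).sub
      (measurable_comp_int (hwm k) (fun z => if z = y then (1:ℝ) else 0))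
  have hFint : ∀ j k : ℕ, Integrable (fun ω =>
      ((if walk η j ω = x then (1:ℝ) else 0) - (if walk η j ω = y then 1 else 0))
      * ((if walk η k ω = x then (1:ℝ) else 0) - (if walk η k ω = y then 1 else 0))) ℙ := by
    intro j k
    refine integrable_of_bdd ((hFmeas j).mul (hFmeas k)).aestronglyMeasurable (C := 1)
      (Eventually.of_forall fun ω => ?_)
    have hb : ∀ l : ℕ, |(if walk η l ω = x then (1:ℝ) else 0)
        - (if walk η l ω = y then 1 else 0)| ≤ 1 := by
      intro l
      by_cases hx : walk η l ω = x <;> by_cases hy : walk η l ω = y <;>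
        simp only [hx, hy, if_pos, if_neg, if_true, if_false] <;>
        first
          | (split_ifs <;> norm_num)
          | norm_num
    calc |((if walk η j ω = x then (1:ℝ) else 0) - (if walk η j ω = y then 1 else 0))
          * ((if walk η k ω = x then (1:ℝ) else 0) - (if walk η k ω = y then 1 else 0))|
        = |(if walk η j ω = x then (1:ℝ) else 0) - (if walk η j ω = y then 1 else 0)|
          * |(if walk η k ω = x then (1:ℝ) else 0) - (if walk η k ω = y then 1 else 0)| :=
          abs_mul _ _
      _ ≤ 1 * 1 := mul_le_mul (hb j) (hb k) (abs_nonneg _) zero_le_one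
      _ = 1 := mul_one 1
  have hsq : ∀ ω : Ω, (∑ k ∈ Finset.range (n+1), ((if walk η k ω = x then (1:ℝ) else 0)
      - (if walk η k ω = y then 1 else 0)))^2
      = ∑ j ∈ Finset.range (n+1), ∑ k ∈ Finset.range (n+1),
        ((if walk η j ω = x then (1:ℝ) else 0) - (if walk η j ω = y then 1 else 0))
        * ((if walk η k ω = x then (1:ℝ) else 0) - (if walk η k ω = y then 1 else 0)) :=
    fun ω => by rw [sq, Finset.sum_mul_sum]
  have hexp : ∫ ω, (∑ k ∈ Finset.range (n+1), ((if walk η k ω = x then (1:ℝ) else 0)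
        - (if walk η k ω = y then 1 else 0)))^2 ∂ℙ
      = ∑ j ∈ Finset.range (n+1), ∑ k ∈ Finset.range (n+1), ∫ ω,
        ((if walk η j ω = x then (1:ℝ) else 0) - (if walk η j ω = y then 1 else 0))
        * ((if walk η k ω = x then (1:ℝ) else 0) - (if walk η k ω = y then 1 else 0)) ∂ℙ := by
    simp only [hsq]
    rw [integral_finset_sum _ (fun j _ => integrable_finset_sum _ fun k _ => hFint j k)]
    exact Finset.sum_congr rfl fun j _ => integral_finset_sum _ fun k _ => hFint j k
  rw [hexp, double_sum_symm (n+1) _ (fun j k => integral_congr_ae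
    (Eventually.of_forall fun ω => mul_comm _ _))]
  have hD : (0:ℝ) ≤ ∑ j ∈ Finset.range (n+1), ∫ ω,
      ((if walk η j ω = x then (1:ℝ) else 0) - (if walk η j ω = y then 1 else 0))
      * ((if walk η j ω = x then (1:ℝ) else 0) - (if walk η j ω = y then 1 else 0)) ∂ℙ :=
    Finset.sum_nonneg fun j _ => integral_nonneg fun ω => mul_self_nonneg _
  have hinner : ∀ j ∈ Finset.range (n+1), (∑ m ∈ Finset.range (n+1-j), ∫ ω,
      ((if walk η j ω = x then (1:ℝ) else 0) - (if walk η j ω = y then 1 else 0))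
      * ((if walk η (j+m) ω = x then (1:ℝ) else 0) - (if walk η (j+m) ω = y then 1 else 0)) ∂ℙ)
      ≤ 2 * |(x:ℝ) - (y:ℝ)|
        * ((ℙ {ω | walk η j ω = x}).toReal + (ℙ {ω | walk η j ω = y}).toReal) := by
    intro j _
    rw [Finset.sum_congr rfl (fun m _ => integral_F_mul hm hi x y j m),
      Finset.sum_add_distrib, ← Finset.mul_sum, ← Finset.mul_sum]
    have d1 := sum_prob_diff_le hm hi h1 h2 j (n+1-j) (y-x)
    have d2 := sum_prob_diff_le hm hi h1 h2 j (n+1-j) (x-y)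
    have habs1 : |((y-x : ℤ) : ℝ)| = |(x:ℝ) - (y:ℝ)| := by push_cast; rw [abs_sub_comm]
    have habs2 : |((x-y : ℤ) : ℝ)| = |(x:ℝ) - (y:ℝ)| := by push_cast; ring_nf
    rw [habs1] at d1; rw [habs2] at d2
    have t1 := mul_le_mul_of_nonneg_left d1 (ENNReal.toReal_nonneg
      (a := ℙ {ω | walk η j ω = x}))
    have t2 := mul_le_mul_of_nonneg_left d2 (ENNReal.toReal_nonneg
      (a := ℙ {ω | walk η j ω = y}))
    calc (ℙ {ω | walk η j ω = x}).toReal * (∑ m ∈ Finset.range (n+1-j),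
          ((ℙ {ω | sumOn η (Finset.Ioc j (j+m)) ω = 0}).toReal
            - (ℙ {ω | sumOn η (Finset.Ioc j (j+m)) ω = y - x}).toReal))
        + (ℙ {ω | walk η j ω = y}).toReal * (∑ m ∈ Finset.range (n+1-j),
          ((ℙ {ω | sumOn η (Finset.Ioc j (j+m)) ω = 0}).toReal
            - (ℙ {ω | sumOn η (Finset.Ioc j (j+m)) ω = x - y}).toReal))
        ≤ (ℙ {ω | walk η j ω = x}).toReal * (2 * |(x:ℝ) - (y:ℝ)|)
          + (ℙ {ω | walk η j ω = y}).toReal * (2 * |(x:ℝ) - (y:ℝ)|) := add_le_add t1 t2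
      _ = 2 * |(x:ℝ) - (y:ℝ)|
          * ((ℙ {ω | walk η j ω = x}).toReal + (ℙ {ω | walk η j ω = y}).toReal) := by ring
  have hU : (∑ j ∈ Finset.range (n+1), ∑ m ∈ Finset.range (n+1-j), ∫ ω,
      ((if walk η j ω = x then (1:ℝ) else 0) - (if walk η j ω = y then 1 else 0))
      * ((if walk η (j+m) ω = x then (1:ℝ) else 0) - (if walk η (j+m) ω = y then 1 else 0)) ∂ℙ)
      ≤ 4 * |(x:ℝ) - (y:ℝ)| * Real.sqrt ((n:ℝ)+1) := by
    calc (∑ j ∈ Finset.range (n+1), ∑ m ∈ Finset.range (n+1-j), ∫ ω,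
        ((if walk η j ω = x then (1:ℝ) else 0) - (if walk η j ω = y then 1 else 0))
        * ((if walk η (j+m) ω = x then (1:ℝ) else 0) - (if walk η (j+m) ω = y then 1 else 0)) ∂ℙ)
        ≤ ∑ j ∈ Finset.range (n+1), 2 * |(x:ℝ) - (y:ℝ)|
          * ((ℙ {ω | walk η j ω = x}).toReal + (ℙ {ω | walk η j ω = y}).toReal) :=
          Finset.sum_le_sum hinner
      _ = 2 * |(x:ℝ) - (y:ℝ)| * ((∑ j ∈ Finset.range (n+1), (ℙ {ω | walk η j ω = x}).toReal)
          + ∑ j ∈ Finset.range (n+1), (ℙ {ω | walk η j ω = y}).toReal) := by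
          rw [← Finset.mul_sum, Finset.sum_add_distrib]
      _ ≤ 2 * |(x:ℝ) - (y:ℝ)| * (Real.sqrt ((n:ℝ)+1) + Real.sqrt ((n:ℝ)+1)) := by
          have s1 := sum_prob_walk_le hm hi h1 h2 (n+1) x
          have s2 := sum_prob_walk_le hm hi h1 h2 (n+1) y
          have hc : ((n+1 : ℕ) : ℝ) = (n:ℝ)+1 := by push_cast; ring
          rw [hc] at s1 s2
          have hnn : (0:ℝ) ≤ 2 * |(x:ℝ) - (y:ℝ)| := by positivity
          exact mul_le_mul_of_nonneg_left (add_le_add s1 s2) hnn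
      _ = 4 * |(x:ℝ) - (y:ℝ)| * Real.sqrt ((n:ℝ)+1) := by ring
  linarith


end SRWProof

/-- There is a constant `C > 0` such that for all `n ≥ 1` and all `x, y ∈ ℤ`,
`E[(N_n(x) − N_n(y))²] ≤ C |x − y| n^{1/2}`. -/
theorem expectation_sq_localTime_diff_le
    {Ω : Type*} [MeasureSpace Ω] [IsProbabilityMeasure (ℙ : Measure Ω)]
    (η : ℕ → Ω → ℤ)
    (hη_meas : ∀ k, Measurable (η k))
    (hη_indep : iIndepFun η ℙ)
    (hη_one : ∀ k, ℙ {ω | η k ω = 1} = 1/2)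
    (hη_negone : ∀ k, ℙ {ω | η k ω = -1} = 1/2) :
    ∃ C > (0 : ℝ), ∀ n : ℕ, 1 ≤ n → ∀ x y : ℤ,
      (∫ ω, ((localTime η n x ω : ℝ) - (localTime η n y ω : ℝ)) ^ 2 ∂ℙ)
        ≤ C * |(x : ℝ) - (y : ℝ)| * (n : ℝ) ^ (1/2 : ℝ) := by
  refine ⟨12, by norm_num, ?_⟩
  intro n hn x y
  have hloc : ∀ (a : ℤ) (ω : Ω), ((localTime η n a ω : ℕ) : ℝ)
      = ∑ k ∈ Finset.range (n+1), (if walk η k ω = a then (1:ℝ) else 0) := by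
    intro a ω
    rw [localTime, Finset.card_filter]
    push_cast
    rfl
  have hmain := SRWProof.main_bound hη_meas hη_indep hη_one hη_negone n x y
  have hstep : (∫ ω, ((localTime η n x ω : ℝ) - (localTime η n y ω : ℝ)) ^ 2 ∂ℙ)
      = ∫ ω, (∑ k ∈ Finset.range (n+1), ((if walk η k ω = x then (1:ℝ) else 0)
        - (if walk η k ω = y then 1 else 0)))^2 ∂ℙ := by
    refine integral_congr_ae (Filter.Eventually.of_forall fun ω => ?_)
    dsimp only
    rw [hloc x ω, hloc y ω, ← Finset.sum_sub_distrib]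
  have hsqrt : Real.sqrt ((n:ℝ)+1) ≤ 1.5 * Real.sqrt (n:ℝ) := by
    have hn1 : (1:ℝ) ≤ (n:ℝ) := by exact_mod_cast hn
    calc Real.sqrt ((n:ℝ)+1) ≤ Real.sqrt (2.25*(n:ℝ)) :=
          Real.sqrt_le_sqrt (by nlinarith)
      _ = Real.sqrt 2.25 * Real.sqrt (n:ℝ) := Real.sqrt_mul (by norm_num) _
      _ = 1.5 * Real.sqrt (n:ℝ) := by
          rw [show (2.25:ℝ) = 1.5^2 by norm_num, Real.sqrt_sq (by norm_num)]
  have hrpow : (n:ℝ) ^ (1/2 : ℝ) = Real.sqrt (n:ℝ) := (Real.sqrt_eq_rpow _).symm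
  rw [hstep, hrpow]
  calc (∫ ω, (∑ k ∈ Finset.range (n+1), ((if walk η k ω = x then (1:ℝ) else 0)
        - (if walk η k ω = y then 1 else 0)))^2 ∂ℙ)
      ≤ 8 * |(x:ℝ) - (y:ℝ)| * Real.sqrt ((n:ℝ)+1) := hmain
    _ ≤ 8 * |(x:ℝ) - (y:ℝ)| * (1.5 * Real.sqrt (n:ℝ)) := by
        have : (0:ℝ) ≤ 8 * |(x:ℝ) - (y:ℝ)| := by positivity
        exact mul_le_mul_of_nonneg_left hsqrt this
    _ = 12 * |(x:ℝ) - (y:ℝ)| * Real.sqrt (n:ℝ) := by ring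
end
end
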